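/- arXiv:1501.03571 — 7 statements merged into one kernel-verified Lean document; each statement's English description precedes it below -/
import Mathlib

section
/- For each sample size $n$, let $\mathcal{G}_n$ be the $\sigma$-algebra generated by $(X_1,\dots,X_n,T_1,\dots,T_n)$, and let $w^{(n)} = (w_i^{(n)})_{T_i=0}$ be $\mathcal{G}_n$-measurable control weights satisfying $w_i^{(n)} \ge 0$, $\sum_{T_i=0} w_i^{(n)} = 1$, and the balancing constraints $\sum_{T_i=0} w_i^{(n)} c(X_i) = \bar c^{(n)}(1)$ where $\bar c^{(n)}(1) = \frac{1}{n_1}\sum_{T_i=1} c(X_i)$. Suppose: (i) conditionally on $\mathcal{G}_n$, the outcomes satisfy $Y_i = \beta^T c(X_i) + \epsilon_i$ for control units, where the $\epsilon_i$ have conditional mean zero, conditional variances bounded by $\sigma^2 < \infty$, and are conditionally uncorrelated; (ii) $\sum_{T_i=0} (w_i^{(n)})^2 \to 0$ in probability as $n \to \infty$; and (iii) $\bar c^{(n)}(1) \to \mu_1 \in \mathbb{R}^p$ in probability. Then $\sum_{T_i=0} w_i^{(n)} Y_i \to \beta^T \mu_1$ in probability as $n \to \infty$. -/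
open MeasureTheory Finset Filter


lemma tim_add {Ω : Type*} [MeasurableSpace Ω] {μ : Measure Ω}
    {f g : ℕ → Ω → ℝ} {a b : Ω → ℝ}
    (hf : TendstoInMeasure μ f atTop a) (hg : TendstoInMeasure μ g atTop b) :
    TendstoInMeasure μ (fun n ω => f n ω + g n ω) atTop (fun ω => a ω + b ω) := by
  rw [tendstoInMeasure_iff_dist] at hf hg ⊢
  intro ε hε
  have h2 : (0:ℝ) < ε / 2 := by positivity
  have hsum := (hf (ε/2) h2).add (hg (ε/2) h2)
  rw [add_zero] at hsum
  refine tendsto_of_tendsto_of_tendsto_of_le_of_le tendsto_const_nhds hsum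
    (fun n => zero_le) (fun n => ?_)
  refine le_trans (measure_mono ?_) (measure_union_le _ _)
  intro x hx
  simp only [Set.mem_setOf_eq, Set.mem_union] at hx ⊢
  by_contra hc
  push_neg at hc
  have h1 : dist (f n x + g n x) (a x + b x) ≤ dist (f n x) (a x) + dist (g n x) (b x) := by
    simp only [Real.dist_eq]
    calc |f n x + g n x - (a x + b x)| = |(f n x - a x) + (g n x - b x)| := by ring_nf
    _ ≤ |f n x - a x| + |g n x - b x| := abs_add_le _ _
  linarith [hc.1, hc.2]

lemma tim_const {Ω : Type*} [MeasurableSpace Ω] {μ : Measure Ω} (a : Ω → ℝ) :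
    TendstoInMeasure μ (fun _ : ℕ => a) atTop a := by
  rw [tendstoInMeasure_iff_dist]
  intro ε hε
  simpa [dist_self, hε.not_ge, Set.setOf_false] using
    (tendsto_const_nhds : Tendsto (fun _ : ℕ => (0 : ENNReal)) atTop (nhds 0))

lemma tim_const_mul {Ω : Type*} [MeasurableSpace Ω] {μ : Measure Ω}
    {f : ℕ → Ω → ℝ} {a : Ω → ℝ} (r : ℝ)
    (hf : TendstoInMeasure μ f atTop a) :
    TendstoInMeasure μ (fun n ω => r * f n ω) atTop (fun ω => r * a ω) := by
  rcases eq_or_ne r 0 with rfl | hr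
  · simpa using tim_const (μ := μ) (fun _ : Ω => (0:ℝ))
  · rw [tendstoInMeasure_iff_dist] at hf ⊢
    intro ε hε
    have h : (0:ℝ) < ε / |r| := by positivity
    have := hf (ε / |r|) h
    convert this using 2 with n
    congr 1
    ext x
    simp only [Set.mem_setOf_eq, Real.dist_eq]
    rw [show r * f n x - r * a x = r * (f n x - a x) by ring, abs_mul,
      div_le_iff₀ (abs_pos.mpr hr), mul_comm]

lemma tim_sum {Ω : Type*} [MeasurableSpace Ω] {μ : Measure Ω} {ι : Type*}
    (s : Finset ι) (f : ι → ℕ → Ω → ℝ) (a : ι → Ω → ℝ)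
    (h : ∀ j ∈ s, TendstoInMeasure μ (f j) atTop (a j)) :
    TendstoInMeasure μ (fun n ω => ∑ j ∈ s, f j n ω) atTop (fun ω => ∑ j ∈ s, a j ω) := by
  classical
  revert h
  refine Finset.induction_on s ?_ ?_
  · intro _
    simpa using tim_const (μ := μ) (fun _ : Ω => (0:ℝ))
  · intro j s' hj ih h
    simp only [Finset.sum_insert hj]
    exact tim_add (h j (Finset.mem_insert_self _ _))
      (ih (fun k hk => h k (Finset.mem_insert_of_mem hk)))

/-- consistency (convergence in probability) of the balanced weighting
estimator under a correctly specified linear outcome model.  For each `n`, `𝒢 n` is the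
σ-algebra generated by `(X 0, …, X (n-1), T 0, …, T (n-1))`, the `𝒢 n`-measurable
nonnegative weights `w n` sum to one and satisfy the exact balancing constraints,
the control residuals `ε i = Y i - ∑ j, β j * c j (X i)` have `𝒢 n`-conditional mean
zero, conditional second moments bounded by `σ2`, and are conditionally uncorrelated,
`∑ (w n i)^2 → 0` in probability, and the treated moment average converges in
probability to `μ1`.  Then `∑_{T i = 0} w n i * Y i → β ⬝ μ1` in probability. -/
theorem stmt_3 {Ω 𝓧 : Type*} [m0 : MeasurableSpace Ω] [MeasurableSpace 𝓧]
    (μ : Measure Ω) [IsProbabilityMeasure μ]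
    {p : ℕ} (X : ℕ → Ω → 𝓧) (T : ℕ → Ω → Bool) (Y : ℕ → Ω → ℝ)
    (c : Fin p → 𝓧 → ℝ) (β : Fin p → ℝ) (σ2 : ℝ)
    (𝒢 : ℕ → MeasurableSpace Ω)
    (h𝒢 : ∀ n, 𝒢 n = (⨆ i ∈ Finset.range n, MeasurableSpace.comap (X i) inferInstance)
              ⊔ (⨆ i ∈ Finset.range n, MeasurableSpace.comap (T i) inferInstance))
    (hle : ∀ n, 𝒢 n ≤ m0)
    (hcmeas : ∀ j, Measurable (c j))
    (w : ℕ → ℕ → Ω → ℝ)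
    (hwmeas : ∀ n i, Measurable[𝒢 n] (w n i))
    (hw0 : ∀ n i ω, 0 ≤ w n i ω)
    (hwsum : ∀ n, ∀ᵐ ω ∂μ,
      ∑ i ∈ (Finset.range n).filter (fun i => T i ω = false), w n i ω = 1)
    (hbal : ∀ n, ∀ᵐ ω ∂μ, ∀ j,
      ∑ i ∈ (Finset.range n).filter (fun i => T i ω = false), w n i ω * c j (X i ω)
        = ((((Finset.range n).filter (fun i => T i ω = true)).card : ℝ))⁻¹ *
            ∑ i ∈ (Finset.range n).filter (fun i => T i ω = true), c j (X i ω))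
    -- integrability of the control residuals and their products
    (hεint : ∀ i, Integrable
      (fun ω => if T i ω = false then Y i ω - ∑ j, β j * c j (X i ω) else 0) μ)
    (hε2int : ∀ i, Integrable
      (fun ω => (if T i ω = false then Y i ω - ∑ j, β j * c j (X i ω) else 0) ^ 2) μ)
    (hεprodint : ∀ i k, Integrable
      (fun ω => (if T i ω = false then Y i ω - ∑ j, β j * c j (X i ω) else 0) *
        (if T k ω = false then Y k ω - ∑ j, β j * c j (X k ω) else 0)) μ)
    -- (i) conditional mean zero, bounded conditional variance, conditionally uncorrelated
    (hmean : ∀ n, ∀ i < n,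
      μ[fun ω => if T i ω = false then Y i ω - ∑ j, β j * c j (X i ω) else 0 | 𝒢 n]
        =ᵐ[μ] 0)
    (hvar : ∀ n, ∀ i < n, ∀ᵐ ω ∂μ,
      (μ[fun ω' => (if T i ω' = false then Y i ω' - ∑ j, β j * c j (X i ω') else 0) ^ 2 | 𝒢 n]) ω
        ≤ σ2)
    (huncorr : ∀ n, ∀ i < n, ∀ k < n, i ≠ k →
      μ[fun ω => (if T i ω = false then Y i ω - ∑ j, β j * c j (X i ω) else 0) *
          (if T k ω = false then Y k ω - ∑ j, β j * c j (X k ω) else 0) | 𝒢 n]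
        =ᵐ[μ] 0)
    -- (ii) sum of squared weights tends to zero in probability
    (hw2 : TendstoInMeasure μ
      (fun n ω => ∑ i ∈ (Finset.range n).filter (fun i => T i ω = false), (w n i ω) ^ 2)
      atTop (fun _ => 0))
    -- (iii) the treated moment average converges in probability to μ1
    (μ1 : Fin p → ℝ)
    (hcbar : ∀ j, TendstoInMeasure μ
      (fun n ω => ((((Finset.range n).filter (fun i => T i ω = true)).card : ℝ))⁻¹ *
        ∑ i ∈ (Finset.range n).filter (fun i => T i ω = true), c j (X i ω))
      atTop (fun _ => μ1 j)) :
    TendstoInMeasure μ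
      (fun n ω => ∑ i ∈ (Finset.range n).filter (fun i => T i ω = false), w n i ω * Y i ω)
      atTop (fun _ => ∑ j, β j * μ1 j) := by
  classical
  -- residuals, truncated weights, key processes
  set e : ℕ → Ω → ℝ :=
    fun i ω => if T i ω = false then Y i ω - ∑ j, β j * c j (X i ω) else 0 with he
  set v : ℕ → ℕ → Ω → ℝ := fun n i ω => if T i ω = false then w n i ω else 0 with hv
  set M : ℕ → Ω → ℝ := fun n ω => ∑ i ∈ Finset.range n, v n i ω * e i ω with hM
  set W : ℕ → Ω → ℝ :=
    fun n ω => ∑ i ∈ (Finset.range n).filter (fun i => T i ω = false), (w n i ω) ^ 2 with hW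
  set cb : Fin p → ℕ → Ω → ℝ := fun j n ω =>
    ((((Finset.range n).filter (fun i => T i ω = true)).card : ℝ))⁻¹ *
      ∑ i ∈ (Finset.range n).filter (fun i => T i ω = true), c j (X i ω) with hcb
  set B : ℕ → Ω → ℝ := fun n ω => ∑ j, β j * cb j n ω with hB
  have heapp : ∀ i (ω : Ω),
      (if T i ω = false then Y i ω - ∑ j, β j * c j (X i ω) else 0) = e i ω := fun _ _ => rfl
  simp only [heapp] at hεint hε2int hεprodint hmean hvar huncorr
  -- measurability of T w.r.t. 𝒢 n
  have hTmeas : ∀ n, ∀ i ∈ Finset.range n, Measurable[𝒢 n] (T i) := by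
    intro n i hi
    rw [measurable_iff_comap_le, h𝒢 n]
    exact le_sup_of_le_right (le_iSup₂ (f := fun i (_ : i ∈ Finset.range n) =>
      MeasurableSpace.comap (T i) inferInstance) i hi)
  have hTset : ∀ n, ∀ i ∈ Finset.range n, MeasurableSet[𝒢 n] {ω | T i ω = false} := by
    intro n i hi
    exact hTmeas n i hi (measurableSet_singleton false)
  have hvmeas : ∀ n, ∀ i ∈ Finset.range n, Measurable[𝒢 n] (v n i) := by
    intro n i hi
    exact Measurable.ite (hTset n i hi) (hwmeas n i) measurable_const
  have hv0 : ∀ n i ω, 0 ≤ v n i ω := by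
    intro n i ω
    by_cases h : T i ω = false <;> simp [hv, h, hw0]
  have hv1 : ∀ n, ∀ᵐ ω ∂μ, ∀ i ∈ Finset.range n, v n i ω ≤ 1 := by
    intro n
    filter_upwards [hwsum n] with ω hs i hi
    by_cases h : T i ω = false
    · simp only [hv, h, if_true]
      calc w n i ω ≤ ∑ k ∈ (Finset.range n).filter (fun k => T k ω = false), w n k ω :=
          Finset.single_le_sum (fun k _ => hw0 n k ω) (Finset.mem_filter.mpr ⟨hi, h⟩)
        _ = 1 := hs
    · simp [hv, h]
  -- W as sum of v²
  have hWv : ∀ n ω, W n ω = ∑ i ∈ Finset.range n, (v n i ω) ^ 2 := by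
    intro n ω
    rw [hW]
    simp only [Finset.sum_filter, hv]
    refine Finset.sum_congr rfl fun i _ => ?_
    by_cases h : T i ω = false <;> simp [h]
  -- σ2 ≥ 0
  have hσ2 : 0 ≤ σ2 := by
    have h0 : (0 : Ω → ℝ) ≤ᵐ[μ] μ[fun ω => e 0 ω ^ 2|𝒢 1] :=
      condExp_nonneg (Filter.Eventually.of_forall fun ω => sq_nonneg _)
    have h1 := hvar 1 0 one_pos
    obtain ⟨ω, hω1, hω2⟩ := (h1.and h0).exists
    exact le_trans hω2 hω1
  -- integrability of pair products
  have hpair : ∀ n, ∀ i ∈ Finset.range n, ∀ k ∈ Finset.range n,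
      Integrable (fun ω => (v n i ω * e i ω) * (v n k ω * e k ω)) μ := by
    intro n i hi k hk
    refine (hεprodint i k).mono ?_ ?_
    · exact ((((hvmeas n i hi).mono (hle n) le_rfl).aestronglyMeasurable).mul
        (hεint i).1).mul
        ((((hvmeas n k hk).mono (hle n) le_rfl).aestronglyMeasurable).mul (hεint k).1)
    · filter_upwards [hv1 n] with ω h1
      have hvi := hv0 n i ω
      have hvk := hv0 n k ω
      calc ‖v n i ω * e i ω * (v n k ω * e k ω)‖
          = v n i ω * |e i ω| * (v n k ω * |e k ω|) := by
            rw [Real.norm_eq_abs, abs_mul, abs_mul, abs_mul,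
              abs_of_nonneg hvi, abs_of_nonneg hvk]
        _ ≤ 1 * |e i ω| * (1 * |e k ω|) := by
            gcongr
            · exact h1 i hi
            · exact h1 k hk
        _ = ‖e i ω * e k ω‖ := by rw [one_mul, one_mul, Real.norm_eq_abs, abs_mul]
  -- integrability of squared truncated weights
  have hint2 : ∀ n, ∀ i ∈ Finset.range n, Integrable (fun ω => (v n i ω)^2) μ := by
    intro n i hi
    refine (integrable_const (1:ℝ)).mono ?_ ?_
    · exact (((hvmeas n i hi).mono (hle n) le_rfl).pow_const 2).aestronglyMeasurable
    · filter_upwards [hv1 n] with ω h1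
      have h2 : (v n i ω)^2 ≤ 1 := by
        simpa using pow_le_pow_left₀ (hv0 n i ω) (h1 i hi) 2
      simpa [Real.norm_eq_abs, abs_of_nonneg (sq_nonneg (v n i ω))] using h2
  -- bound on products of truncated weights
  have hVVbound : ∀ n, ∀ i ∈ Finset.range n, ∀ k ∈ Finset.range n,
      ∀ᵐ ω ∂μ, ‖v n i ω * v n k ω‖ ≤ 1 := by
    intro n i hi k hk
    filter_upwards [hv1 n] with ω h1
    rw [Real.norm_eq_abs, abs_mul, abs_of_nonneg (hv0 n i ω), abs_of_nonneg (hv0 n k ω)]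
    exact mul_le_one₀ (h1 i hi) (hv0 n k ω) (h1 k hk)
  -- pull-out of the weights from the integral of pair products
  have hIpair : ∀ n, ∀ i ∈ Finset.range n, ∀ k ∈ Finset.range n,
      ∫ ω, (v n i ω * e i ω) * (v n k ω * e k ω) ∂μ
        = ∫ ω, ((fun ω' => v n i ω' * v n k ω') * μ[fun ω' => e i ω' * e k ω'|𝒢 n]) ω ∂μ := by
    intro n i hi k hk
    have hprod : (fun ω => (v n i ω * e i ω) * (v n k ω * e k ω))
        = (fun ω => v n i ω * v n k ω) * (fun ω => e i ω * e k ω) := by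
      funext ω; simp only [Pi.mul_apply]; ring
    have hmul := condExp_stronglyMeasurable_mul_of_bound (hle n)
      (((hvmeas n i hi).mul (hvmeas n k hk)).stronglyMeasurable)
      (hεprodint i k) 1 (hVVbound n i hi k hk)
    calc ∫ ω, (v n i ω * e i ω) * (v n k ω * e k ω) ∂μ
        = ∫ ω, ((fun ω' => v n i ω' * v n k ω') * fun ω' => e i ω' * e k ω') ω ∂μ := by
          rw [hprod]
      _ = ∫ ω, (μ[(fun ω' => v n i ω' * v n k ω') * fun ω' => e i ω' * e k ω'|𝒢 n]) ω ∂μ :=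
          (integral_condExp (hle n)).symm
      _ = ∫ ω, ((fun ω' => v n i ω' * v n k ω') * μ[fun ω' => e i ω' * e k ω'|𝒢 n]) ω ∂μ :=
          integral_congr_ae hmul
  have hcondint : ∀ n, ∀ i ∈ Finset.range n, ∀ k ∈ Finset.range n,
      Integrable ((fun ω' => v n i ω' * v n k ω') * μ[fun ω' => e i ω' * e k ω'|𝒢 n]) μ := by
    intro n i hi k hk
    have hmul := condExp_stronglyMeasurable_mul_of_bound (hle n)
      (((hvmeas n i hi).mul (hvmeas n k hk)).stronglyMeasurable)
      (hεprodint i k) 1 (hVVbound n i hi k hk)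
    exact integrable_condExp.congr hmul
  -- off-diagonal terms vanish
  have hoff : ∀ n, ∀ i ∈ Finset.range n, ∀ k ∈ Finset.range n, i ≠ k →
      ∫ ω, (v n i ω * e i ω) * (v n k ω * e k ω) ∂μ = 0 := by
    intro n i hi k hk hik
    rw [hIpair n i hi k hk]
    refine integral_eq_zero_of_ae ?_
    filter_upwards [huncorr n i (Finset.mem_range.mp hi) k (Finset.mem_range.mp hk) hik]
      with ω h
    simp only [Pi.mul_apply, h, Pi.zero_apply, mul_zero]
  -- diagonal terms
  have hdiag : ∀ n, ∀ i ∈ Finset.range n,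
      ∫ ω, (v n i ω * e i ω) * (v n i ω * e i ω) ∂μ ≤ σ2 * ∫ ω, (v n i ω)^2 ∂μ := by
    intro n i hi
    rw [hIpair n i hi i hi]
    have hee : (μ[fun ω' => e i ω' * e i ω'|𝒢 n]) =ᵐ[μ] μ[fun ω' => e i ω' ^ 2|𝒢 n] :=
      condExp_congr_ae (Filter.Eventually.of_forall fun ω => (sq (e i ω)).symm)
    have hbound : ∀ᵐ ω ∂μ,
        ((fun ω' => v n i ω' * v n i ω') * μ[fun ω' => e i ω' * e i ω'|𝒢 n]) ω
          ≤ σ2 * (v n i ω)^2 := by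
      filter_upwards [hvar n i (Finset.mem_range.mp hi), hee] with ω h1 h2
      have hle2 : (μ[fun ω' => e i ω' * e i ω'|𝒢 n]) ω ≤ σ2 := by rw [h2]; exact h1
      calc (v n i ω * v n i ω) * (μ[fun ω' => e i ω' * e i ω'|𝒢 n]) ω
          ≤ (v n i ω * v n i ω) * σ2 :=
            mul_le_mul_of_nonneg_left hle2 (mul_nonneg (hv0 n i ω) (hv0 n i ω))
        _ = σ2 * (v n i ω)^2 := by ring
    calc ∫ ω, ((fun ω' => v n i ω' * v n i ω') * μ[fun ω' => e i ω' * e i ω'|𝒢 n]) ω ∂μ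
        ≤ ∫ ω, σ2 * (v n i ω)^2 ∂μ :=
          integral_mono_ae (hcondint n i hi i hi) ((hint2 n i hi).const_mul σ2) hbound
      _ = σ2 * ∫ ω, (v n i ω)^2 ∂μ := integral_const_mul σ2 _
  -- the second-moment bound
  have hEM : ∀ n, Integrable (fun ω => (M n ω) ^ 2) μ ∧
      ∫ ω, (M n ω) ^ 2 ∂μ ≤ σ2 * ∫ ω, W n ω ∂μ := by
    intro n
    have hMsq : ∀ ω, (M n ω)^2
        = ∑ i ∈ Finset.range n, ∑ k ∈ Finset.range n,
            (v n i ω * e i ω) * (v n k ω * e k ω) := by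
      intro ω
      simp only [hM]
      rw [sq, Finset.sum_mul_sum]
    have hintM : Integrable (fun ω => (M n ω)^2) μ := by
      rw [show (fun ω => (M n ω)^2) = fun ω => ∑ i ∈ Finset.range n, ∑ k ∈ Finset.range n,
          (v n i ω * e i ω) * (v n k ω * e k ω) from funext hMsq]
      exact integrable_finset_sum _
        (fun i hi => integrable_finset_sum _ (fun k hk => hpair n i hi k hk))
    refine ⟨hintM, ?_⟩
    calc ∫ ω, (M n ω)^2 ∂μ
        = ∫ ω, ∑ i ∈ Finset.range n, ∑ k ∈ Finset.range n,
            (v n i ω * e i ω) * (v n k ω * e k ω) ∂μ :=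
          integral_congr_ae (Filter.Eventually.of_forall hMsq)
      _ = ∑ i ∈ Finset.range n, ∫ ω, ∑ k ∈ Finset.range n,
            (v n i ω * e i ω) * (v n k ω * e k ω) ∂μ :=
          integral_finset_sum _
            (fun i hi => integrable_finset_sum _ (fun k hk => hpair n i hi k hk))
      _ = ∑ i ∈ Finset.range n, ∑ k ∈ Finset.range n,
            ∫ ω, (v n i ω * e i ω) * (v n k ω * e k ω) ∂μ :=
          Finset.sum_congr rfl
            (fun i hi => integral_finset_sum _ (fun k hk => hpair n i hi k hk))
      _ ≤ ∑ i ∈ Finset.range n, σ2 * ∫ ω, (v n i ω)^2 ∂μ := by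
          refine Finset.sum_le_sum fun i hi => ?_
          rw [Finset.sum_eq_single_of_mem i hi
            (fun k hk hki => hoff n i hi k hk (Ne.symm hki))]
          exact hdiag n i hi
      _ = σ2 * ∑ i ∈ Finset.range n, ∫ ω, (v n i ω)^2 ∂μ := (Finset.mul_sum _ _ _).symm
      _ = σ2 * ∫ ω, ∑ i ∈ Finset.range n, (v n i ω)^2 ∂μ := by
          rw [integral_finset_sum _ (fun i hi => hint2 n i hi)]
      _ = σ2 * ∫ ω, W n ω ∂μ := by
          congr 1
          exact integral_congr_ae (Filter.Eventually.of_forall fun ω => (hWv n ω).symm)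
  -- pointwise bounds on W
  have hW01 : ∀ n, ∀ᵐ ω ∂μ, 0 ≤ W n ω ∧ W n ω ≤ 1 := by
    intro n
    filter_upwards [hwsum n, hv1 n] with ω hs h1
    constructor
    · rw [hWv]
      exact Finset.sum_nonneg fun i _ => sq_nonneg _
    · rw [hWv]
      calc ∑ i ∈ Finset.range n, (v n i ω)^2
          ≤ ∑ i ∈ Finset.range n, v n i ω := by
            refine Finset.sum_le_sum fun i hi => ?_
            nlinarith [hv0 n i ω, h1 i hi]
        _ = ∑ i ∈ (Finset.range n).filter (fun i => T i ω = false), w n i ω := by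
            rw [Finset.sum_filter]
        _ = 1 := hs
  have hWmeas : ∀ n, AEStronglyMeasurable (W n) μ := by
    intro n
    rw [show W n = fun ω => ∑ i ∈ Finset.range n, (v n i ω)^2 from funext (hWv n)]
    exact (Finset.measurable_sum _
      (fun i hi => ((hvmeas n i hi).mono (hle n) le_rfl).pow_const 2)).aestronglyMeasurable
  -- ∫ W n → 0
  have hWint : Tendsto (fun n => ∫ ω, W n ω ∂μ) atTop (nhds 0) := by
    have hw2' : TendstoInMeasure μ W atTop (fun _ => (0:ℝ)) := hw2
    apply Filter.tendsto_of_subseq_tendsto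
    intro ns hns
    have h1 : TendstoInMeasure μ (fun k => W (ns k)) atTop (fun _ => (0:ℝ)) :=
      fun ε hε => (hw2' ε hε).comp hns
    obtain ⟨ms, hms, hae⟩ := h1.exists_seq_tendsto_ae
    refine ⟨ms, ?_⟩
    have hdct := tendsto_integral_of_dominated_convergence (μ := μ)
      (F := fun k => W (ns (ms k))) (f := fun _ => (0:ℝ)) (bound := fun _ => (1:ℝ))
      (fun k => hWmeas _) (integrable_const 1) (fun k => ?_) ?_
    · simpa using hdct
    · filter_upwards [hW01 (ns (ms k))] with ω h
      rw [Real.norm_eq_abs]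
      exact abs_le.mpr ⟨by linarith [h.1], h.2⟩
    · filter_upwards [hae] with ω h
      exact h
  have hWnonneg : ∀ n, 0 ≤ ∫ ω, W n ω ∂μ := fun n =>
    integral_nonneg_of_ae ((hW01 n).mono fun ω h => h.1)
  -- M → 0 in probability (Chebyshev)
  have hMtend : TendstoInMeasure μ M atTop (fun _ => (0:ℝ)) := by
    rw [tendstoInMeasure_iff_dist]
    intro ε hε
    have hbound : ∀ n, μ {x | ε ≤ dist (M n x) 0}
        ≤ ENNReal.ofReal (σ2 * (∫ ω, W n ω ∂μ) / ε^2) := by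
      intro n
      have hsub : {x | ε ≤ dist (M n x) 0} ⊆ {x | ε^2 ≤ (M n x)^2} := by
        intro x hx
        simp only [Set.mem_setOf_eq, dist_zero_right, Real.norm_eq_abs] at hx
        simp only [Set.mem_setOf_eq]
        calc ε^2 ≤ |M n x|^2 := pow_le_pow_left₀ hε.le hx 2
          _ = (M n x)^2 := sq_abs _
      refine le_trans (measure_mono hsub) ?_
      have hmarkov := mul_meas_ge_le_integral_of_nonneg
        (Filter.Eventually.of_forall fun ω => sq_nonneg (M n ω)) (hEM n).1 (ε^2)
      have hnn : 0 ≤ σ2 * (∫ ω, W n ω ∂μ) / ε^2 := by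
        have := hWnonneg n
        positivity
      rw [ENNReal.le_ofReal_iff_toReal_le (measure_ne_top μ _) hnn]
      rw [le_div_iff₀ (by positivity : (0:ℝ) < ε^2)]
      calc (μ {x | ε^2 ≤ (M n x)^2}).toReal * ε^2
          = ε^2 * (μ {x | ε^2 ≤ (M n x)^2}).toReal := mul_comm _ _
        _ ≤ ∫ ω, (M n ω)^2 ∂μ := hmarkov
        _ ≤ σ2 * ∫ ω, W n ω ∂μ := (hEM n).2
    refine tendsto_of_tendsto_of_tendsto_of_le_of_le tendsto_const_nhds ?_
      (fun n => zero_le) hbound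
    have h2 : Tendsto (fun n => σ2 * (∫ ω, W n ω ∂μ) / ε^2) atTop (nhds 0) := by
      have := (hWint.const_mul σ2).div_const (ε^2)
      simpa using this
    simpa using ENNReal.tendsto_ofReal h2
  -- B → ∑ β μ1 in probability
  have hBtend : TendstoInMeasure μ B atTop (fun _ => ∑ j, β j * μ1 j) := by
    have := tim_sum Finset.univ (fun j n ω => β j * cb j n ω)
      (fun j _ => β j * μ1 j) (fun j _ => tim_const_mul (β j) (hcbar j))
    simpa [hB] using this
  -- decomposition a.e.
  have hdecomp : ∀ n,
      (fun ω => ∑ i ∈ (Finset.range n).filter (fun i => T i ω = false), w n i ω * Y i ω)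
        =ᵐ[μ] fun ω => M n ω + B n ω := by
    intro n
    filter_upwards [hbal n] with ω hb
    have hsplit : ∀ i ∈ (Finset.range n).filter (fun i => T i ω = false),
        w n i ω * Y i ω = w n i ω * e i ω + ∑ j, β j * (w n i ω * c j (X i ω)) := by
      intro i hi
      have hT := (Finset.mem_filter.mp hi).2
      have h1 : ∑ j, β j * (w n i ω * c j (X i ω)) = w n i ω * ∑ j, β j * c j (X i ω) := by
        rw [Finset.mul_sum]
        exact Finset.sum_congr rfl fun j _ => by ring
      rw [show e i ω = Y i ω - ∑ j, β j * c j (X i ω) from by simp [he, hT], h1]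
      ring
    rw [Finset.sum_congr rfl hsplit, Finset.sum_add_distrib]
    congr 1
    · simp only [hM]
      rw [Finset.sum_filter]
      refine Finset.sum_congr rfl fun i _ => ?_
      by_cases h : T i ω = false
      · simp [hv, h]
      · simp [hv, h]
    · rw [Finset.sum_comm]
      simp only [hB, hcb]
      refine Finset.sum_congr rfl fun j _ => ?_
      calc ∑ i ∈ (Finset.range n).filter (fun i => T i ω = false),
            β j * (w n i ω * c j (X i ω))
          = β j * ∑ i ∈ (Finset.range n).filter (fun i => T i ω = false),
              w n i ω * c j (X i ω) := by rw [Finset.mul_sum]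
        _ = _ := by rw [hb j]
  have := tim_add hMtend hBtend
  refine TendstoInMeasure.congr (fun n => (hdecomp n).symm) ?_ this
  filter_upwards with ω
  simp
end

section
/- Let $(\Omega, \mathcal{F}, P)$ be a probability space, $X$ a random element, and $T \in \{0,1\}$ a random variable with $0 < P(T=1) < 1$. Let $e(X)$ be a version of the conditional probability $P(T = 1 \mid \sigma(X))$ and suppose $0 < e(X) < 1$ almost surely. Then for every measurable function $f$ with $f(X)$ integrable and $\frac{e(X)}{1 - e(X)} f(X)$ integrable on $\{T = 0\}$, the change-of-measure identity holds: $\mathbb{E}[f(X) \mid T = 1] = \frac{P(T=0)}{P(T=1)} \cdot \mathbb{E}\left[\frac{e(X)}{1 - e(X)} f(X) \,\middle|\, T = 0\right]$, where $\mathbb{E}[\cdot \mid T = t]$ denotes expectation under $P$ conditioned on the event $\{T = t\}$. -/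
open MeasureTheory ProbabilityTheory

/-- The sub-σ-algebra generated by `X`. -/
def mSub {Ω 𝓧 : Type*} [MeasurableSpace 𝓧] (X : Ω → 𝓧) : MeasurableSpace Ω :=
  MeasurableSpace.comap X inferInstance

/-- the inverse-probability-weighting change-of-measure identity.
`eX` is a version of the conditional probability `P(T = 1 ∣ σ(X))` with
`0 < eX < 1` a.s. (overlap), and `0 < P(T=1) < 1`.  Then for every measurable `f`
with `f(X)` integrable and `(eX/(1-eX)) f(X)` integrable under the conditional
measure given `{T = 0}`,
`E[f(X) ∣ T=1] = (P(T=0)/P(T=1)) ⬝ E[(eX/(1-eX)) f(X) ∣ T=0]`. -/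
theorem stmt_8 {Ω 𝓧 : Type*} [m0 : MeasurableSpace Ω] [MeasurableSpace 𝓧]
    (μ : Measure Ω) [IsProbabilityMeasure μ]
    (X : Ω → 𝓧) (hX : Measurable X) (T : Ω → Bool) (hT : Measurable T)
    (hT1 : 0 < (μ {ω | T ω = true}).toReal)
    (hT1' : (μ {ω | T ω = true}).toReal < 1)
    (eX : Ω → ℝ)
    (heX : eX =ᵐ[μ]
      μ[fun ω => if T ω then (1 : ℝ) else 0 | MeasurableSpace.comap X inferInstance])
    (hover : ∀ᵐ ω ∂μ, 0 < eX ω ∧ eX ω < 1)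
    (f : 𝓧 → ℝ) (hf : Measurable f)
    (hfint : Integrable (fun ω => f (X ω)) μ)
    (hwint : Integrable (fun ω => eX ω / (1 - eX ω) * f (X ω)) (μ[|{ω | T ω = false}])) :
    ∫ ω, f (X ω) ∂(μ[|{ω | T ω = true}])
      = ((μ {ω | T ω = false}).toReal / (μ {ω | T ω = true}).toReal) *
        ∫ ω, eX ω / (1 - eX ω) * f (X ω) ∂(μ[|{ω | T ω = false}]) := by
  have hm : mSub X ≤ m0 := hX.comap_le
  haveI : SigmaFinite (μ.trim hm) := inferInstance
  set s1 : Set Ω := {ω | T ω = true} with hs1_def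
  set s0 : Set Ω := {ω | T ω = false} with hs0_def
  have hs1 : MeasurableSet[m0] s1 := hT (measurableSet_singleton true)
  have hs0 : MeasurableSet[m0] s0 := hT (measurableSet_singleton false)
  have hs0c : s0 = s1ᶜ := by
    ext ω; simp [hs0_def, hs1_def]
  have hμ1ne : μ s1 ≠ 0 := by
    intro h; rw [h] at hT1; simp at hT1
  have hμ1top : μ s1 ≠ ⊤ := measure_ne_top μ s1
  have hμ0 : (μ s0).toReal = 1 - (μ s1).toReal := by
    rw [hs0c, prob_compl_eq_one_sub hs1,
      ENNReal.toReal_sub_of_le prob_le_one ENNReal.one_ne_top]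
    simp
  have hμ0pos : 0 < (μ s0).toReal := by rw [hμ0]; linarith
  have hμ0ne : μ s0 ≠ 0 := by
    intro h; rw [h] at hμ0pos; simp at hμ0pos
  have hμ0top : μ s0 ≠ ⊤ := measure_ne_top μ s0
  -- indicator of treated
  set t : Ω → ℝ := fun ω => if T ω then (1:ℝ) else 0 with ht_def
  set g : Ω → ℝ := μ[t|mSub X] with hg_def
  have heX' : eX =ᵐ[μ] g := heX
  have hXm : Measurable[mSub X] X := fun s hs => ⟨s, hs, rfl⟩
  have hfXm : StronglyMeasurable[mSub X] (fun ω => f (X ω)) := (hf.comp hXm).stronglyMeasurable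
  have ht_ind : t = s1.indicator (fun _ => (1:ℝ)) := by
    funext ω; by_cases h : T ω <;> simp [ht_def, hs1_def, h, Set.indicator]
  have ht_int : Integrable t μ := by
    rw [ht_ind]; exact (integrable_const 1).indicator hs1
  have hft_eq : (fun ω => f (X ω)) * t = s1.indicator (fun ω => f (X ω)) := by
    funext ω; by_cases h : T ω <;> simp [ht_def, hs1_def, h, Set.indicator]
  have hft_int : Integrable ((fun ω => f (X ω)) * t) μ := by
    rw [hft_eq]; exact hfint.indicator hs1
  -- Step A
  have stepA : ∫ ω in s1, f (X ω) ∂μ = ∫ ω, f (X ω) * g ω ∂μ := by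
    have h1 : μ[(fun ω => f (X ω)) * t|mSub X] =ᵐ[μ] (fun ω => f (X ω)) * g :=
      condExp_mul_of_stronglyMeasurable_left hfXm hft_int ht_int
    calc ∫ ω in s1, f (X ω) ∂μ = ∫ ω, s1.indicator (fun ω => f (X ω)) ω ∂μ := by
            rw [integral_indicator hs1]
      _ = ∫ ω, ((fun ω => f (X ω)) * t) ω ∂μ := by rw [hft_eq]
      _ = ∫ ω, (μ[(fun ω => f (X ω)) * t|mSub X]) ω ∂μ := (integral_condExp hm).symm
      _ = ∫ ω, ((fun ω => f (X ω)) * g) ω ∂μ := integral_congr_ae h1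
      _ = ∫ ω, f (X ω) * g ω ∂μ := rfl
  -- weights
  set W : Ω → ℝ := fun ω => eX ω / (1 - eX ω) with hW_def
  set w : Ω → ℝ := fun ω => g ω / (1 - g ω) with hw_def
  have hWw : W =ᵐ[μ] w := by
    filter_upwards [heX'] with ω h; simp only [hW_def, hw_def, h, hg_def]
  have hgm : Measurable[mSub X] g := stronglyMeasurable_condExp.measurable
  have hwm : StronglyMeasurable[mSub X] (w * fun ω => f (X ω)) := by
    have : Measurable[mSub X] w := hgm.div ((@measurable_const ℝ Ω _ (mSub X) 1).sub hgm)
    exact (this.mul (hf.comp hXm)).stronglyMeasurable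
  -- integrability on s0
  have hcond0 : (μ[|s0]) = (μ s0)⁻¹ • μ.restrict s0 := rfl
  have hWint0 : IntegrableOn (fun ω => W ω * f (X ω)) s0 μ := by
    have h := hwint
    rw [hcond0] at h
    exact (integrable_smul_measure (ENNReal.inv_ne_zero.mpr hμ0top)
      (ENNReal.inv_ne_top.mpr hμ0ne)).mp h
  have h1t_int : Integrable (fun ω => 1 - t ω) μ := (integrable_const 1).sub ht_int
  have hWfind : (fun ω => W ω * f (X ω) * (1 - t ω)) = s0.indicator (fun ω => W ω * f (X ω)) := by
    funext ω; by_cases h : T ω <;> simp [ht_def, hs0_def, h, Set.indicator]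
  have hWft_int : Integrable (fun ω => W ω * f (X ω) * (1 - t ω)) μ := by
    rw [hWfind]; exact (integrable_indicator_iff hs0).mpr hWint0
  have hwfeq : (fun ω => W ω * f (X ω) * (1 - t ω)) =ᵐ[μ]
      (w * fun ω => f (X ω)) * (fun ω => 1 - t ω) := by
    filter_upwards [hWw] with ω h
    simp only [Pi.mul_apply, h]
  have hwft_int : Integrable ((w * fun ω => f (X ω)) * (fun ω => 1 - t ω)) μ :=
    hWft_int.congr hwfeq
  have hcond1t : μ[(fun ω => 1 - t ω)|mSub X] =ᵐ[μ] fun ω => 1 - g ω := by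
    have h : μ[(fun _ => (1:ℝ)) - t|mSub X] =ᵐ[μ] μ[(fun _ => (1:ℝ))|mSub X] - μ[t|mSub X] :=
      condExp_sub (integrable_const (1:ℝ)) ht_int _
    have h2 : (fun ω => 1 - t ω) = (fun _ => (1:ℝ)) - t := rfl
    rw [h2]
    filter_upwards [h] with ω hω
    rw [hω]
    simp [condExp_const hm (1:ℝ), hg_def]
  -- Step B
  have stepB : ∫ ω in s0, W ω * f (X ω) ∂μ = ∫ ω, w ω * f (X ω) * (1 - g ω) ∂μ := by
    have h1 : μ[(w * fun ω => f (X ω)) * (fun ω => 1 - t ω)|mSub X] =ᵐ[μ]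
        (w * fun ω => f (X ω)) * μ[(fun ω => 1 - t ω)|mSub X] :=
      condExp_mul_of_stronglyMeasurable_left hwm hwft_int h1t_int
    calc ∫ ω in s0, W ω * f (X ω) ∂μ
        = ∫ ω, s0.indicator (fun ω => W ω * f (X ω)) ω ∂μ := by rw [integral_indicator hs0]
      _ = ∫ ω, W ω * f (X ω) * (1 - t ω) ∂μ := by rw [hWfind]
      _ = ∫ ω, ((w * fun ω => f (X ω)) * (fun ω => 1 - t ω)) ω ∂μ := integral_congr_ae hwfeq
      _ = ∫ ω, (μ[(w * fun ω => f (X ω)) * (fun ω => 1 - t ω)|mSub X]) ω ∂μ :=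
            (integral_condExp hm).symm
      _ = ∫ ω, w ω * f (X ω) * (1 - g ω) ∂μ := by
            refine integral_congr_ae ?_
            filter_upwards [h1, hcond1t] with ω h h'
            rw [h]
            simp only [Pi.mul_apply, h']
  -- the key identity
  have key : ∫ ω in s1, f (X ω) ∂μ = ∫ ω in s0, W ω * f (X ω) ∂μ := by
    rw [stepA, stepB]
    refine integral_congr_ae ?_
    filter_upwards [heX', hover] with ω hgω hh
    obtain ⟨h0, h1⟩ := hh
    have hg' : g ω = eX ω := hgω.symm
    have hne : (1:ℝ) - g ω ≠ 0 := by rw [hg']; linarith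
    show f (X ω) * g ω = g ω / (1 - g ω) * f (X ω) * (1 - g ω)
    field_simp
  -- bookkeeping with conditional measures
  have hL : ∫ ω, f (X ω) ∂(μ[|s1]) = (μ s1).toReal⁻¹ * ∫ ω in s1, f (X ω) ∂μ := by
    rw [show (μ[|s1]) = (μ s1)⁻¹ • μ.restrict s1 from rfl, integral_smul_measure,
      ENNReal.toReal_inv, smul_eq_mul]
  have hR : ∫ ω, W ω * f (X ω) ∂(μ[|s0]) = (μ s0).toReal⁻¹ * ∫ ω in s0, W ω * f (X ω) ∂μ := by
    rw [hcond0, integral_smul_measure, ENNReal.toReal_inv, smul_eq_mul]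
  rw [hL, hR, key]
  have h1pos : (0:ℝ) < (μ s1).toReal := hT1
  field_simp
end

section
/- Let $(\Omega, \mathcal{F}, P)$ be a probability space with random covariate moments $c(X) \in \mathbb{R}^p$ (integrable) and treatment indicator $T \in \{0,1\}$ with $0 < P(T=1) < 1$. Suppose the propensity score follows the logistic-linear model: $P(T=1 \mid \sigma(X)) = \frac{\exp(\theta^* \cdot c(X))}{1 + \exp(\theta^* \cdot c(X))}$ almost surely for some $\theta^* \in \mathbb{R}^p$, and let $m^* = \mathbb{E}[c(X) \mid T=1]$. Then the population Entropy Balancing estimating equation is satisfied exactly at $(\theta^*, m^*)$: $\mathbb{E}\left[(1-T)\, e^{\theta^* \cdot c(X)}\, (c_j(X) - m^*_j)\right] = 0$ for every $j = 1,\dots,p$. -/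
open MeasureTheory ProbabilityTheory Finset

/-- if the propensity score follows the logistic-linear model
`P(T=1 ∣ σ(X)) = exp(θ*⬝c(X))/(1 + exp(θ*⬝c(X)))` a.s. and
`m* = E[c(X) ∣ T=1]`, then the population Entropy Balancing estimating equation
`E[(1-T) exp(θ*⬝c(X)) (cⱼ(X) - m*ⱼ)] = 0` holds for every `j`. -/
theorem stmt_9 {Ω 𝓧 : Type*} [m0 : MeasurableSpace Ω] [MeasurableSpace 𝓧]
    (μ : Measure Ω) [IsProbabilityMeasure μ]
    (X : Ω → 𝓧) (hX : Measurable X) (T : Ω → Bool) (hT : Measurable T)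
    (hT1 : μ {ω | T ω = true} ≠ 0) (hT0 : μ {ω | T ω = false} ≠ 0)
    {p : ℕ} (c : Fin p → 𝓧 → ℝ) (hc : ∀ j, Measurable (c j))
    (hcint : ∀ j, Integrable (fun ω => c j (X ω)) μ)
    (θ : Fin p → ℝ)
    (hmodel : μ[fun ω => if T ω then (1 : ℝ) else 0 |
        MeasurableSpace.comap X inferInstance]
      =ᵐ[μ] fun ω => Real.exp (∑ j, θ j * c j (X ω)) /
        (1 + Real.exp (∑ j, θ j * c j (X ω))))
    (mstar : Fin p → ℝ)
    (hmstar : ∀ j, mstar j = ∫ ω, c j (X ω) ∂(μ[|{ω | T ω = true}])) :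
    ∀ j, ∫ ω, (if T ω then (0 : ℝ) else 1) * Real.exp (∑ k, θ k * c k (X ω)) *
        (c j (X ω) - mstar j) ∂μ = 0 := by
  intro j
  set m : MeasurableSpace Ω := MeasurableSpace.comap X inferInstance with hmdef
  have hm : m ≤ m0 := hX.comap_le
  haveI : SigmaFinite (μ.trim hm) := by
    have : IsFiniteMeasure (μ.trim hm) := isFiniteMeasure_trim hm
    infer_instance
  -- basic functions
  set s : Ω → ℝ := fun ω => Real.exp (∑ k, θ k * c k (X ω)) with hsdef
  set g : Ω → ℝ := fun ω => s ω / (1 + s ω) with hgdef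
  set h : Ω → ℝ := fun ω => c j (X ω) - mstar j with hhdef
  set I : Ω → ℝ := fun ω => if T ω then (1 : ℝ) else 0 with hIdef
  set u : Ω → ℝ := fun ω => (1 : ℝ) - I ω with hudef
  have hXm : Measurable[m] X := fun t ht => ⟨t, ht, rfl⟩
  have hφ : Measurable fun x : 𝓧 => Real.exp (∑ k, θ k * c k x) :=
    Real.measurable_exp.comp (Finset.measurable_sum _ fun k _ => (measurable_const.mul (hc k)))
  have hsm : Measurable[m] s := hφ.comp hXm
  have hjm : Measurable[m] h := ((hc j).comp hXm).sub measurable_const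
  have hspos : ∀ ω, 0 < s ω := fun ω => Real.exp_pos _
  have hsne : ∀ ω, (1 : ℝ) + s ω ≠ 0 := fun ω => by positivity
  have hImeas : Measurable[m0] I := by
    have : I = (fun b : Bool => if b then (1 : ℝ) else 0) ∘ T := rfl
    rw [this]; exact (measurable_from_top).comp hT
  have hIint : Integrable I μ := by
    refine ⟨hImeas.aestronglyMeasurable (μ := μ), HasFiniteIntegral.of_bounded (C := 1) ?_⟩
    refine Filter.Eventually.of_forall fun ω => ?_
    simp only [hIdef]; split <;> simp
  have hu_int : Integrable u μ := (integrable_const 1).sub hIint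
  have hhint : Integrable h μ := (hcint j).sub (integrable_const _)
  -- rewrite the goal integrand
  set f : Ω → ℝ := fun ω => s ω * h ω with hfdef
  have hfun : (fun ω => (if T ω then (0 : ℝ) else 1) * Real.exp (∑ k, θ k * c k (X ω)) *
      (c j (X ω) - mstar j)) = fun ω => f ω * u ω := by
    funext ω
    simp only [hfdef, hudef, hIdef, hsdef, hhdef]
    by_cases hTe : T ω <;> simp [hTe] <;> ring
  rw [hfun]
  by_cases hint : Integrable (fun ω => f ω * u ω) μ
  swap
  · exact integral_undef hint
  -- conditional expectation computations
  have hfsm : StronglyMeasurable[m] f := (hsm.mul hjm).stronglyMeasurable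
  have hfu : (fun ω => f ω * u ω) = f * u := rfl
  have h1 : μ[f * u|m] =ᵐ[μ] f * μ[u|m] :=
    condExp_mul_of_stronglyMeasurable_left hfsm (hfu ▸ hint) hu_int
  have hcu : μ[u|m] =ᵐ[μ] fun ω => 1 - g ω := by
    have h2 : μ[u|m] =ᵐ[μ] μ[fun _ => (1 : ℝ)|m] - μ[I|m] :=
      condExp_sub (integrable_const 1) hIint m
    have h3 : μ[fun _ => (1 : ℝ)|m] = fun _ => (1 : ℝ) := condExp_const hm 1
    filter_upwards [h2, hmodel] with ω h2ω hmω
    simp only [h2ω, h3, Pi.sub_apply, hmω, hgdef, hsdef]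
  have key1 : ∫ ω, f ω * u ω ∂μ = ∫ ω, h ω * g ω ∂μ := by
    have := integral_condExp hm (f := f * u) (μ := μ)
    rw [hfu, ← this, integral_congr_ae (h1.trans ?_)]
    filter_upwards [hcu] with ω hω
    simp only [Pi.mul_apply, hω, hfdef, hgdef]
    have := hsne ω
    field_simp
    ring
  -- second pull-out
  have hhI : Integrable (fun ω => h ω * I ω) μ := by
    have : Integrable (fun ω => I ω * h ω) μ :=
      hhint.bdd_mul hImeas.aestronglyMeasurable (μ := μ)
        (c := 1) (Filter.Eventually.of_forall fun ω => by simp only [hIdef]; split <;> simp)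
    exact this.congr (Filter.Eventually.of_forall fun ω => mul_comm _ _)
  have hhIfun : (fun ω => h ω * I ω) = h * I := rfl
  have h4 : μ[h * I|m] =ᵐ[μ] h * μ[I|m] :=
    condExp_mul_of_stronglyMeasurable_left hjm.stronglyMeasurable (hhIfun ▸ hhI) hIint
  have key2 : ∫ ω, h ω * g ω ∂μ = ∫ ω, h ω * I ω ∂μ := by
    have := integral_condExp hm (f := h * I) (μ := μ)
    rw [hhIfun, ← this, integral_congr_ae (h4.trans ?_).symm]
    filter_upwards [hmodel] with ω hω
    simp only [Pi.mul_apply, hω, hgdef, hsdef]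
  rw [key1, key2]
  -- final computation on the event {T = true}
  set A : Set Ω := {ω | T ω = true} with hAdef
  have hA : MeasurableSet[m0] A := hT (measurableSet_singleton true)
  have hind : (fun ω => h ω * I ω) = fun ω => A.indicator h ω := by
    funext ω
    by_cases hTe : T ω <;> simp [hIdef, Set.indicator, hAdef, hTe]
  have hstep : ∫ ω, A.indicator h ω ∂μ = ∫ ω in A, h ω ∂μ :=
    @integral_indicator Ω ℝ m0 _ _ h A μ hA
  rw [hind, hstep]
  simp only [hhdef]
  have hAfin : μ A ≠ ⊤ := measure_ne_top μ A
  have htoReal : (μ A).toReal ≠ 0 := by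
    simp [ENNReal.toReal_eq_zero_iff, hT1, hAfin, hAdef]; exact hT1
  have hmj : mstar j = (μ A).toReal⁻¹ * ∫ ω in A, c j (X ω) ∂μ := by
    rw [hmstar j]
    simp only [ProbabilityTheory.cond, integral_smul_measure, smul_eq_mul,
      ENNReal.toReal_inv, hAdef]
  have hintA : Integrable h (μ.restrict A) := hhint.restrict
  rw [integral_sub ((hcint j).restrict) (integrable_const _)]
  rw [integral_const, measureReal_restrict_apply_univ, measureReal_def, smul_eq_mul, hmj]
  field_simp
  ring
end

section
/- Let $c^* \in \mathbb{R}^p$ and $\epsilon > 0. For each $b \in \{-1, 0, 1\}^p$, let $R_b = \{x \in \mathbb{R}^p : \|x - (c^* + \tfrac{3}{2}\epsilon\, b)\|_\infty \le \tfrac{\epsilon}{2}\}$ be the box of sup-norm radius $\epsilon/2$ centered at $c^* + \tfrac{3}{2}\epsilon\, b$. Then: (i) the $3^p$ boxes $R_b$ are pairwise disjoint; and (ii) for any choice of points $x_b \in R_b$, one for each $b \in \{-1,0,1\}^p$, the convex hull of $\{x_b : b \in \{-1,0,1\}^p\}$ contains the box $B_\epsilon(c^*) = \{x \in \mathbb{R}^p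 : \|x - c^*\|_\infty \le \epsilon\}$. -/
open Finset

lemma aux_term (ε c xv v bv : ℝ) (hε : 0 < ε)
    (hb : bv = if 0 < v then 1 else if v < 0 then -1 else 0)
    (hd : |xv - (c + 3 / 2 * ε * bv)| ≤ ε / 2) :
    c * v + ε * |v| ≤ xv * v := by
  rw [abs_le] at hd
  rcases lt_trichotomy v 0 with h | h | h
  · have hbv : bv = -1 := by rw [hb]; simp [h, not_lt.mpr h.le]
    rw [abs_of_neg h]; subst hbv; nlinarith [hd.1, hd.2]
  · simp [h]
  · have hbv : bv = 1 := by rw [hb]; simp [h]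
    rw [abs_of_pos h]; subst hbv; nlinarith [hd.1, hd.2]

/-- geometric lemma for the grid of `3^p` boxes.  For `b ∈ {-1,0,1}^p`,
let `R b` be the sup-norm box of radius `ε/2` centered at `c* + (3/2)ε b`.  Then
(i) the boxes `R b` are pairwise disjoint, and (ii) for any selection of one point
`x b ∈ R b` for each `b`, the convex hull of the selected points contains the sup-norm
box of radius `ε` centered at `c*`. -/
theorem stmt_13 {p : ℕ} (cstar : Fin p → ℝ) (ε : ℝ) (hε : 0 < ε) :
    (∀ b b' : Fin p → ℝ,
      (∀ j, b j = -1 ∨ b j = 0 ∨ b j = 1) → (∀ j, b' j = -1 ∨ b' j = 0 ∨ b' j = 1) →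
      b ≠ b' →
      Disjoint {x : Fin p → ℝ | ∀ j, |x j - (cstar j + 3 / 2 * ε * b j)| ≤ ε / 2}
               {x : Fin p → ℝ | ∀ j, |x j - (cstar j + 3 / 2 * ε * b' j)| ≤ ε / 2})
    ∧ (∀ x : (Fin p → ℝ) → (Fin p → ℝ),
        (∀ b, (∀ j, b j = -1 ∨ b j = 0 ∨ b j = 1) →
          ∀ j, |x b j - (cstar j + 3 / 2 * ε * b j)| ≤ ε / 2) →
        {y : Fin p → ℝ | ∀ j, |y j - cstar j| ≤ ε} ⊆
          convexHull ℝ (x '' {b | ∀ j, b j = -1 ∨ b j = 0 ∨ b j = 1})) := by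
  constructor
  · intro b b' hb hb' hne
    rw [Set.disjoint_left]
    intro z hz hz'
    obtain ⟨j, hj⟩ := Function.ne_iff.mp hne
    have h1 := hz j
    have h2 := hz' j
    rw [abs_le] at h1 h2
    rcases hb j with h | h | h <;> rcases hb' j with h' | h' | h' <;>
      rw [h] at h1 <;> rw [h'] at h2 <;> rw [h, h'] at hj <;>
      first
        | exact hj rfl
        | nlinarith [h1.1, h1.2, h2.1, h2.2]
  · intro x hx y hy
    by_contra hyK
    have hSfin : ({b : Fin p → ℝ | ∀ j, b j = -1 ∨ b j = 0 ∨ b j = 1}).Finite := by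
      have hsub : ({b : Fin p → ℝ | ∀ j, b j = -1 ∨ b j = 0 ∨ b j = 1}) ⊆
          Set.pi Set.univ (fun _ => ({-1, 0, 1} : Set ℝ)) := by
        intro b hb j _
        rcases hb j with h | h | h <;> simp [h]
      exact (Set.Finite.pi (fun _ => (by simp : ({-1, 0, 1} : Set ℝ).Finite))).subset hsub
    have hfin : (x '' {b : Fin p → ℝ | ∀ j, b j = -1 ∨ b j = 0 ∨ b j = 1}).Finite :=
      hSfin.image x
    obtain ⟨f, u, hfu, huy⟩ := geometric_hahn_banach_closed_point
      (convex_convexHull ℝ _) (hfin.isClosed_convexHull (𝕜 := ℝ)) hyK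
    set v : Fin p → ℝ := fun j => f (Pi.single j 1) with hv
    have hrep : ∀ z : Fin p → ℝ, f z = ∑ j, z j * v j := by
      intro z
      conv_lhs => rw [← Finset.univ_sum_single z]
      rw [map_sum]
      refine Finset.sum_congr rfl fun j _ => ?_
      have hzj : Pi.single j (z j) = z j • (Pi.single j 1 : Fin p → ℝ) := by
        rw [← Pi.single_smul, smul_eq_mul, mul_one]
      rw [hzj, map_smul, smul_eq_mul, hv]
    set b : Fin p → ℝ := fun j => if 0 < v j then 1 else if v j < 0 then -1 else 0 with hb
    have hbS : b ∈ {b : Fin p → ℝ | ∀ j, b j = -1 ∨ b j = 0 ∨ b j = 1} := by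
      intro j
      simp only [hb]
      split_ifs <;> simp
    have hxb := hx b hbS
    have key1 : f cstar + ε * ∑ j, |v j| ≤ f (x b) := by
      rw [hrep, hrep]
      rw [show (∑ j, cstar j * v j) + ε * ∑ j, |v j|
          = ∑ j, (cstar j * v j + ε * |v j|) by
        rw [Finset.mul_sum, ← Finset.sum_add_distrib]]
      exact Finset.sum_le_sum fun j _ => aux_term ε (cstar j) (x b j) (v j) (b j) hε rfl (hxb j)
    have key2 : f y ≤ f cstar + ε * ∑ j, |v j| := by
      rw [hrep, hrep, Finset.mul_sum, ← Finset.sum_add_distrib]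
      refine Finset.sum_le_sum fun j _ => ?_
      have h1 : (y j - cstar j) * v j ≤ ε * |v j| := by
        calc (y j - cstar j) * v j ≤ |(y j - cstar j) * v j| := le_abs_self _
          _ = |y j - cstar j| * |v j| := abs_mul _ _
          _ ≤ ε * |v j| := by
              exact mul_le_mul_of_nonneg_right (hy j) (abs_nonneg _)
      nlinarith
    have hxbK : f (x b) < u := hfu _ (subset_convexHull ℝ _ ⟨b, hbS, rfl⟩)
    linarith
end

section
/- Let $V_1, V_2, \dots$ be independent identically distributed random vectors in $\mathbb{R}^p$ with law $\mu$, let $c^* \in \mathbb{R}^p$ and $\epsilon > 0$, and suppose $\rho := \min_{b \in \{-1,0,1\}^p} \mu(R_b) > 0$, where $R_b$ is the box of sup-norm radius $\epsilon/2$ centered at $c^* + \tfrac{3}{2}\epsilon\, b$. Then $P\left(\mathrm{conv}\{V_1,\dots,V_n\} \supseteq B_\epsilon(c^*)\right) \ge 1 - 3^p (1-\rho)^n \to 1$ as $n \to \infty$, where $B_\epsilon(c^*) = \{x : \|x - c^*\|_\infty \le \epsilon\}$ and $\mathrm{conv}$ denotes the convex hull. -/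
open MeasureTheory ProbabilityTheory Filter

lemma geom_lemma {p : ℕ} (cstar : Fin p → ℝ) (ε : ℝ)
    (S : Set (Fin p → ℝ)) (hSfin : S.Finite)
    (hS : ∀ b : Fin p → ℝ, (∀ j, b j = -1 ∨ b j = 0 ∨ b j = 1) →
      ∃ y ∈ S, ∀ j, |y j - (cstar j + 3 / 2 * ε * b j)| ≤ ε / 2) :
    {x : Fin p → ℝ | ∀ j, |x j - cstar j| ≤ ε} ⊆ convexHull ℝ S := by
  intro x hx
  by_contra hxS
  obtain ⟨f, u, hfx, hfb⟩ := geometric_hahn_banach_point_closed (convex_convexHull ℝ S)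
    (hSfin.isClosed_convexHull (𝕜 := ℝ)) hxS
  set w : Fin p → ℝ := fun j => f (fun i => if j = i then 1 else 0) with hw
  have hf : ∀ y : Fin p → ℝ, f y = ∑ j, y j * w j := by
    intro y
    have := LinearMap.pi_apply_eq_sum_univ
      ((f : (Fin p → ℝ) →L[ℝ] ℝ) : (Fin p → ℝ) →ₗ[ℝ] ℝ) y
    simpa [smul_eq_mul, hw] using this
  set b : Fin p → ℝ := fun j => if 0 < w j then -1 else if w j < 0 then 1 else 0 with hb
  obtain ⟨y, hyS, hy⟩ := hS b (by
    intro j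
    by_cases h1 : 0 < w j <;> by_cases h2 : w j < 0 <;> simp [hb, h1, h2])
  have key : f y ≤ f x := by
    rw [hf, hf]
    apply Finset.sum_le_sum
    intro j _
    have hbj : b j * w j = -|w j| := by
      rcases lt_trichotomy (w j) 0 with h | h | h
      · simp [hb, not_lt.mpr h.le, h, abs_of_neg h]
      · simp [hb, h]
      · simp [hb, h, abs_of_pos h]
    have e1 : (y j - (cstar j + 3 / 2 * ε * b j)) * w j ≤ ε / 2 * |w j| := by
      calc (y j - (cstar j + 3 / 2 * ε * b j)) * w j
          ≤ |(y j - (cstar j + 3 / 2 * ε * b j)) * w j| := le_abs_self _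
        _ = |y j - (cstar j + 3 / 2 * ε * b j)| * |w j| := abs_mul _ _
        _ ≤ ε / 2 * |w j| := mul_le_mul_of_nonneg_right (hy j) (abs_nonneg _)
    have e2 : -(ε * |w j|) ≤ (x j - cstar j) * w j := by
      have h1 : |(x j - cstar j) * w j| ≤ ε * |w j| := by
        rw [abs_mul]
        exact mul_le_mul_of_nonneg_right (hx j) (abs_nonneg _)
      linarith [neg_abs_le ((x j - cstar j) * w j)]
    have hbj' : 3 / 2 * ε * (b j * w j) = 3 / 2 * ε * (-|w j|) := by rw [hbj]
    nlinarith [e1, e2, hbj', abs_nonneg (w j)]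
  have := hfb y (subset_convexHull ℝ S hyS)
  linarith

/-- if `V 0, V 1, …` are i.i.d. random vectors in `ℝ^p` with law `ν`
giving mass at least `ρ > 0` to each of the `3^p` sup-norm boxes of radius `ε/2`
centered at `c* + (3/2)ε b`, `b ∈ {-1,0,1}^p`, then the probability that the convex
hull of `V 0, …, V (n-1)` contains the sup-norm box `B_ε(c*)` is at least
`1 - 3^p (1-ρ)^n`, and in particular tends to `1` as `n → ∞`. -/
theorem stmt_14 {Ω : Type*} [MeasurableSpace Ω] (μ : Measure Ω) [IsProbabilityMeasure μ]
    {p : ℕ} (V : ℕ → Ω → (Fin p → ℝ)) (hVm : ∀ k, Measurable (V k))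
    (ν : Measure (Fin p → ℝ)) [IsProbabilityMeasure ν]
    (hindep : iIndepFun V μ)
    (hident : ∀ k, μ.map (V k) = ν)
    (cstar : Fin p → ℝ) (ε : ℝ) (hε : 0 < ε) (ρ : ℝ) (hρ : 0 < ρ)
    (hρle : ∀ b : Fin p → ℝ, (∀ j, b j = -1 ∨ b j = 0 ∨ b j = 1) →
      ρ ≤ (ν {x | ∀ j, |x j - (cstar j + 3 / 2 * ε * b j)| ≤ ε / 2}).toReal) :
    (∀ n : ℕ, 1 - (3 : ℝ) ^ p * (1 - ρ) ^ n ≤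
      (μ {ω | {x : Fin p → ℝ | ∀ j, |x j - cstar j| ≤ ε} ⊆
        convexHull ℝ (Set.range (fun k : Fin n => V k ω))}).toReal)
    ∧ Tendsto (fun n : ℕ =>
        (μ {ω | {x : Fin p → ℝ | ∀ j, |x j - cstar j| ≤ ε} ⊆
          convexHull ℝ (Set.range (fun k : Fin n => V k ω))}).toReal)
        atTop (nhds 1) := by
  classical
  set Rb : (Fin p → ℝ) → Set (Fin p → ℝ) :=
    fun b => {x | ∀ j, |x j - (cstar j + 3 / 2 * ε * b j)| ≤ ε / 2} with hRb
  have hRbm : ∀ b, MeasurableSet (Rb b) := by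
    intro b
    have : Rb b = ⋂ j, {x : Fin p → ℝ | |x j - (cstar j + 3 / 2 * ε * b j)| ≤ ε / 2} := by
      ext x; simp [hRb, Set.mem_iInter]
    rw [this]
    exact MeasurableSet.iInter fun j =>
      measurableSet_le (((measurable_pi_apply j).sub measurable_const).abs) measurable_const
  set B : Finset (Fin p → ℝ) := Fintype.piFinset (fun _ => ({-1, 0, 1} : Finset ℝ)) with hB
  have hBcard : (B.card : ℝ) = 3 ^ p := by
    rw [hB, Fintype.card_piFinset]
    norm_num
  have hBmem : ∀ b : Fin p → ℝ, b ∈ B ↔ ∀ j, b j = -1 ∨ b j = 0 ∨ b j = 1 := by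
    intro b
    rw [hB, Fintype.mem_piFinset]
    simp
  -- mass of each box complement
  have hρ1 : ρ ≤ 1 := by
    have h0 := hρle (fun _ => 0) (fun j => Or.inr (Or.inl rfl))
    refine h0.trans ?_
    have := ENNReal.toReal_mono (measure_ne_top ν Set.univ)
      (measure_mono (Set.subset_univ
        {x | ∀ j, |x j - (cstar j + 3 / 2 * ε * (fun _ => (0:ℝ)) j)| ≤ ε / 2}))
    simpa using this
  set E : ℕ → Set Ω := fun n => {ω | {x : Fin p → ℝ | ∀ j, |x j - cstar j| ≤ ε} ⊆
    convexHull ℝ (Set.range (fun k : Fin n => V k ω))} with hE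
  have main : ∀ n : ℕ, 1 - (3 : ℝ) ^ p * (1 - ρ) ^ n ≤ (μ (E n)).toReal := by
    intro n
    set G : Set Ω := ⋂ b ∈ B, ⋃ k ∈ Finset.range n, (V k) ⁻¹' (Rb b) with hG
    have hGm : MeasurableSet G :=
      MeasurableSet.biInter B.countable_toSet fun b _ =>
        MeasurableSet.biUnion (Finset.range n).countable_toSet fun k _ =>
          (hVm k) (hRbm b)
    have hGE : G ⊆ E n := by
      intro ω hω
      rw [hE]
      apply geom_lemma cstar ε _ (Set.finite_range _)
      intro b hbval
      have hbB : b ∈ B := (hBmem b).mpr hbval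
      have := Set.mem_iInter₂.mp hω b hbB
      obtain ⟨k, hk, hkR⟩ := Set.mem_iUnion₂.mp this
      exact ⟨V k ω, ⟨⟨k, Finset.mem_range.mp hk⟩, rfl⟩, hkR⟩
    -- bound μ Gᶜ
    have hcompl : (μ Gᶜ).toReal ≤ (3 : ℝ) ^ p * (1 - ρ) ^ n := by
      have hGc : Gᶜ = ⋃ b ∈ B, (⋃ k ∈ Finset.range n, (V k) ⁻¹' (Rb b))ᶜ := by
        rw [hG, Set.compl_iInter₂]
      have hbnd : ∀ b ∈ B, (μ (⋃ k ∈ Finset.range n, (V k) ⁻¹' (Rb b))ᶜ).toReal ≤ (1 - ρ) ^ n := by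
        intro b hbB
        have hint : (⋃ k ∈ Finset.range n, (V k) ⁻¹' (Rb b))ᶜ
            = ⋂ k ∈ Finset.range n, (V k) ⁻¹' (Rb b)ᶜ := by
          rw [Set.compl_iUnion₂]
          simp [Set.preimage_compl]
        have hind := hindep.meas_biInter (S := Finset.range n)
          (s := fun k => (V k) ⁻¹' (Rb b)ᶜ)
          (fun k _ => ⟨(Rb b)ᶜ, (hRbm b).compl, rfl⟩)
        have hone : ∀ k, μ ((V k) ⁻¹' (Rb b)ᶜ) = ν (Rb b)ᶜ := by
          intro k
          rw [← hident k, Measure.map_apply (hVm k) (hRbm b).compl]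
        rw [hint, hind]
        have : ∏ k ∈ Finset.range n, μ ((V k) ⁻¹' (Rb b)ᶜ) = (ν (Rb b)ᶜ) ^ n := by
          rw [Finset.prod_congr rfl (fun k _ => hone k), Finset.prod_const,
            Finset.card_range]
        rw [this, ENNReal.toReal_pow]
        apply pow_le_pow_left₀ ENNReal.toReal_nonneg
        rw [prob_compl_eq_one_sub (hRbm b),
          ENNReal.toReal_sub_of_le (prob_le_one) ENNReal.one_ne_top]
        simp only [ENNReal.toReal_one]
        linarith [hρle b ((hBmem b).mp hbB)]
      calc (μ Gᶜ).toReal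
          ≤ (∑ b ∈ B, μ (⋃ k ∈ Finset.range n, (V k) ⁻¹' (Rb b))ᶜ).toReal := by
            apply ENNReal.toReal_mono
            · exact (ENNReal.sum_lt_top.mpr fun b _ => measure_lt_top μ _).ne
            · rw [hGc]; exact measure_biUnion_finset_le B _
        _ = ∑ b ∈ B, (μ (⋃ k ∈ Finset.range n, (V k) ⁻¹' (Rb b))ᶜ).toReal := by
            rw [ENNReal.toReal_sum (fun b _ => measure_ne_top μ _)]
        _ ≤ ∑ _b ∈ B, (1 - ρ) ^ n := Finset.sum_le_sum hbnd
        _ = (3 : ℝ) ^ p * (1 - ρ) ^ n := by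
            rw [Finset.sum_const, nsmul_eq_mul, hBcard]
    have h1 : (μ Gᶜ).toReal = 1 - (μ G).toReal := by
      rw [prob_compl_eq_one_sub hGm,
        ENNReal.toReal_sub_of_le (prob_le_one) ENNReal.one_ne_top]
      simp
    have h2 : (μ G).toReal ≤ (μ (E n)).toReal :=
      ENNReal.toReal_mono (measure_ne_top μ _) (measure_mono hGE)
    linarith
  refine ⟨main, ?_⟩
  have hupper : ∀ n : ℕ, (μ (E n)).toReal ≤ 1 := by
    intro n
    have := ENNReal.toReal_mono (measure_ne_top μ Set.univ)
      (measure_mono (Set.subset_univ (E n)))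
    simpa using this
  have hlow : Tendsto (fun n : ℕ => 1 - (3 : ℝ) ^ p * (1 - ρ) ^ n) atTop (nhds 1) := by
    have hpow : Tendsto (fun n : ℕ => (1 - ρ) ^ n) atTop (nhds 0) :=
      tendsto_pow_atTop_nhds_zero_of_lt_one (by linarith) (by linarith)
    have := (tendsto_const_nhds (x := (1 : ℝ)) (f := atTop)).sub
      ((tendsto_const_nhds (x := (3 : ℝ) ^ p) (f := atTop)).mul hpow)
    simpa using this
  exact tendsto_of_tendsto_of_tendsto_of_le_of_le hlow tendsto_const_nhds main hupper
end

section
/- Let $(X_i, T_i)$, $i = 1, 2, \dots$, be independent identically distributed, with $T_i \in \{0,1\}$ and moment map $c : \mathcal{X} \to \mathbb{R}^p$ with $\mathbb{E}\|c(X)\| < \infty$ and $0 < P(T=1) < 1$. Set $c^* = \mathbb{E}[c(X) \mid T=1]$ and suppose there exists $\epsilon > 0$ such that every box $R_b$ of sup-norm radius $\epsilon/2$ centered at $c^* + \tfrac{3}{2}\epsilon\, b$, $b \in \{-1,0,1\}^p$, has positive probability under the conditional law of $c(X)$ given $T = 0$ (which holds under the overlap assumption $0 < P(T=1|X) < 1$).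 Then the probability that the Entropy Balancing constraints are solvable — i.e., that there exist weights $w_i > 0$ with $\sum_{T_i = 0, i \le n} w_i = 1$ and $\sum_{T_i = 0, i \le n} w_i\, c(X_i) = \frac{1}{n_1}\sum_{T_i = 1, i \le n} c(X_i)$ — tends to $1$ as $n \to \infty$. -/
open MeasureTheory ProbabilityTheory Filter Finset

open Topology

section AuxEB

def sgn3 : Fin 3 → ℝ := ![-1, 0, 1]

lemma sgn3_mem (k : Fin 3) : sgn3 k = -1 ∨ sgn3 k = 0 ∨ sgn3 k = 1 := by
  fin_cases k <;> norm_num [sgn3]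

lemma convA {p : ℕ} (cstar : Fin p → ℝ) (ε : ℝ) (hε : 0 < ε)
    (y : (Fin p → Fin 3) → (Fin p → ℝ))
    (hy : ∀ b j, |y b j - (cstar j + 3 / 2 * ε * sgn3 (b j))| ≤ ε / 2)
    (z : Fin p → ℝ) (hz : ∀ j, |z j - cstar j| ≤ ε / 2) :
    z ∈ convexHull ℝ (Set.range y) := by
  classical
  by_contra hcon
  obtain ⟨f, u, hfu, huz⟩ := geometric_hahn_banach_closed_point
    (convex_convexHull ℝ _) ((Set.finite_range y).isCompact_convexHull ℝ).isClosed hcon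
  set a : Fin p → ℝ := fun j => f (fun k => if j = k then 1 else 0) with ha
  have h1 : ∀ x : Fin p → ℝ, f x = ∑ j, x j * a j := by
    intro x
    conv_lhs => rw [pi_eq_sum_univ x]
    rw [map_sum]
    exact Finset.sum_congr rfl fun j _ => by rw [_root_.map_smul]; simp [ha, smul_eq_mul]
  set S := ∑ j, |a j| with hS
  have hS0 : 0 ≤ S := Finset.sum_nonneg fun j _ => abs_nonneg _
  set b : Fin p → Fin 3 := fun j => if 0 ≤ a j then 2 else 0 with hb
  have hsg : ∀ j, sgn3 (b j) * a j = |a j| := by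
    intro j
    by_cases h : 0 ≤ a j
    · have hh : sgn3 (b j) = 1 := by simp [hb, h, sgn3]
      rw [hh, one_mul, abs_of_nonneg h]
    · have hh : sgn3 (b j) = -1 := by simp [hb, h, sgn3]
      rw [hh, abs_of_neg (not_le.1 h)]; ring
  have key : ∀ v : Fin p → ℝ, f v - f cstar = ∑ j, (v j - cstar j) * a j := by
    intro v; rw [h1, h1, ← Finset.sum_sub_distrib]
    exact Finset.sum_congr rfl fun j _ => by ring
  have hzb : f z - f cstar ≤ ε / 2 * S := by
    rw [key]
    calc ∑ j, (z j - cstar j) * a j ≤ ∑ j, ε / 2 * |a j| := by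
          refine Finset.sum_le_sum fun j _ => ?_
          calc (z j - cstar j) * a j ≤ |(z j - cstar j) * a j| := le_abs_self _
            _ = |z j - cstar j| * |a j| := abs_mul _ _
            _ ≤ ε / 2 * |a j| := mul_le_mul_of_nonneg_right (hz j) (abs_nonneg _)
      _ = ε / 2 * S := by rw [hS, Finset.mul_sum]
  have hyb : ε * S ≤ f (y b) - f cstar := by
    rw [key]
    have hterm : ∀ j, (3:ℝ)/2 * ε * |a j| - ε / 2 * |a j| ≤ (y b j - cstar j) * a j := by
      intro j
      have hd : (y b j - cstar j) * a j
          = 3 / 2 * ε * (sgn3 (b j) * a j)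
            + (y b j - (cstar j + 3 / 2 * ε * sgn3 (b j))) * a j := by ring
      have h2 : |(y b j - (cstar j + 3 / 2 * ε * sgn3 (b j))) * a j| ≤ ε / 2 * |a j| := by
        rw [abs_mul]; exact mul_le_mul_of_nonneg_right (hy b j) (abs_nonneg _)
      have h3 := neg_abs_le ((y b j - (cstar j + 3 / 2 * ε * sgn3 (b j))) * a j)
      rw [hd, hsg j]
      linarith
    calc ε * S = ∑ j, ((3:ℝ)/2 * ε * |a j| - ε / 2 * |a j|) := by
          rw [hS, Finset.mul_sum]
          exact Finset.sum_congr rfl fun j _ => by ring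
      _ ≤ ∑ j, (y b j - cstar j) * a j := Finset.sum_le_sum fun j _ => hterm j
  have hmem : y b ∈ convexHull ℝ (Set.range y) := subset_convexHull ℝ _ ⟨b, rfl⟩
  have hlt := hfu (y b) hmem
  nlinarith

lemma weightsB {p : ℕ} (cstar : Fin p → ℝ) (ε : ℝ) (hε : 0 < ε)
    (S : Finset ℕ) (x : ℕ → Fin p → ℝ) (z : Fin p → ℝ)
    (hz : ∀ j, |z j - cstar j| ≤ ε / 4)
    (hrep : ∀ b : Fin p → Fin 3, ∃ i ∈ S,
      ∀ j, |x i j - (cstar j + 3 / 2 * ε * sgn3 (b j))| ≤ ε / 2) :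
    ∃ w : ℕ → ℝ, (∀ i ∈ S, 0 < w i) ∧ (∑ i ∈ S, w i = 1) ∧
      ∀ j, ∑ i ∈ S, w i * x i j = z j := by
  classical
  choose rep hrepS hrepbox using hrep
  have hSne : S.Nonempty := ⟨rep (fun _ => 0), hrepS _⟩
  set N : ℝ := (S.card : ℝ) with hN
  have hN1 : 1 ≤ N := by
    have h : (1:ℕ) ≤ S.card := Finset.card_pos.2 hSne
    rw [hN]; exact_mod_cast h
  set K : ℝ := ∑ i ∈ S, ∑ j, |z j - x i j| with hK
  have hK0 : 0 ≤ K := Finset.sum_nonneg fun i _ => Finset.sum_nonneg fun j _ => abs_nonneg _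
  set δ : ℝ := min ((2 * N)⁻¹) (ε / (8 * (K + 1))) with hδ
  have hδ0 : 0 < δ := lt_min (by positivity) (by positivity)
  have hNδ : N * δ ≤ 1 / 2 := by
    have h := min_le_left ((2 * N)⁻¹) (ε / (8 * (K + 1)))
    have hN0 : 0 < N := by linarith
    rw [← hδ] at h
    calc N * δ ≤ N * (2 * N)⁻¹ := by nlinarith
      _ = 1 / 2 := by field_simp
  have hden0 : 0 < 1 - N * δ := by linarith
  set z' : Fin p → ℝ := fun j => (z j - δ * ∑ i ∈ S, x i j) / (1 - N * δ) with hz'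
  have hz'near : ∀ j, |z' j - z j| ≤ ε / 4 := by
    intro j
    have he : z' j - z j = δ * (N * z j - ∑ i ∈ S, x i j) / (1 - N * δ) := by
      simp only [hz']; rw [eq_div_iff hden0.ne', sub_mul, div_mul_cancel₀ _ hden0.ne']; ring
    have hb1 : |N * z j - ∑ i ∈ S, x i j| ≤ K := by
      have hh : N * z j - ∑ i ∈ S, x i j = ∑ i ∈ S, (z j - x i j) := by
        rw [Finset.sum_sub_distrib, Finset.sum_const, nsmul_eq_mul]
      rw [hh]
      calc |∑ i ∈ S, (z j - x i j)| ≤ ∑ i ∈ S, |z j - x i j| :=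
            Finset.abs_sum_le_sum_abs _ _
        _ ≤ K := Finset.sum_le_sum fun i _ =>
            Finset.single_le_sum (f := fun j' => |z j' - x i j'|) (fun j' _ => abs_nonneg _) (Finset.mem_univ j)
    have hδ2 : δ ≤ ε / (8 * (K + 1)) := min_le_right _ _
    have hδ3 : δ * (8 * (K + 1)) ≤ ε := by
      rw [← le_div_iff₀ (by positivity : (0:ℝ) < 8 * (K + 1))]; exact hδ2
    rw [he, abs_div, abs_mul, abs_of_pos hδ0, abs_of_pos hden0]
    rw [div_le_iff₀ hden0]
    nlinarith
  have hz'c : ∀ j, |z' j - cstar j| ≤ ε / 2 := by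
    intro j
    have := abs_sub_le (z' j) (z j) (cstar j)
    have h1 := hz'near j
    have h2 := hz j
    linarith
  set y : (Fin p → Fin 3) → (Fin p → ℝ) := fun b => x (rep b) with hy
  have hzconv : z' ∈ convexHull ℝ (Set.range y) :=
    convA cstar ε hε y (fun b j => hrepbox b j) z' hz'c
  set t : Finset (Fin p → ℝ) := Finset.image y Finset.univ with ht
  have hrange : (Set.range y) = ↑t := by
    rw [ht, Finset.coe_image, Finset.coe_univ, Set.image_univ]
  rw [hrange, Finset.convexHull_eq] at hzconv
  obtain ⟨v, hv0, hv1, hvc⟩ := hzconv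
  rw [Finset.centerMass_eq_of_sum_1 _ _ hv1] at hvc
  have hpick : ∀ q, ∃ i, q ∈ t → (i ∈ S ∧ x i = q) := by
    intro q
    by_cases hq : q ∈ t
    · obtain ⟨b, _, rfl⟩ := Finset.mem_image.1 hq
      exact ⟨rep b, fun _ => ⟨hrepS b, rfl⟩⟩
    · exact ⟨0, fun h => absurd h hq⟩
  choose pick hpickP using hpick
  set w : ℕ → ℝ := fun i =>
    δ + (1 - N * δ) * ∑ q ∈ t.filter (fun q => pick q = i), v q with hw
  refine ⟨w, ?_, ?_, ?_⟩
  · intro i _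
    have : 0 ≤ ∑ q ∈ t.filter (fun q => pick q = i), v q :=
      Finset.sum_nonneg fun q hq => hv0 q (Finset.mem_of_mem_filter q hq)
    have := mul_nonneg hden0.le this
    simp only [hw]
    linarith [hδ0]
  · rw [hw]
    simp only
    rw [Finset.sum_add_distrib, Finset.sum_const, nsmul_eq_mul, ← Finset.mul_sum,
      Finset.sum_fiberwise_of_maps_to (fun q hq => (hpickP q hq).1) v, hv1, ← hN]
    ring
  · intro j
    have hinner : ∀ i ∈ S, ∑ q ∈ t.filter (fun q => pick q = i), v q * q j
        = (∑ q ∈ t.filter (fun q => pick q = i), v q) * x i j := by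
      intro i _
      rw [Finset.sum_mul]
      refine Finset.sum_congr rfl fun q hq => ?_
      obtain ⟨hqt, hqi⟩ := Finset.mem_filter.1 hq
      rw [← hqi, (hpickP q hqt).2]
    have hfib : ∑ i ∈ S, ∑ q ∈ t.filter (fun q => pick q = i), (v q * q j)
        = ∑ q ∈ t, v q * q j :=
      Finset.sum_fiberwise_of_maps_to (fun q hq => (hpickP q hq).1) _
    have hzj : ∑ q ∈ t, v q * q j = z' j := by
      have hcf := congrFun hvc j
      simpa [Finset.sum_apply, smul_eq_mul] using hcf
    calc ∑ i ∈ S, w i * x i j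
        = ∑ i ∈ S, (δ * x i j
            + (1 - N * δ) * ∑ q ∈ t.filter (fun q => pick q = i), v q * q j) := by
          refine Finset.sum_congr rfl fun i hi => ?_
          rw [hinner i hi, hw]; ring
      _ = δ * ∑ i ∈ S, x i j + (1 - N * δ) * ∑ q ∈ t, v q * q j := by
          rw [Finset.sum_add_distrib, ← Finset.mul_sum, ← Finset.mul_sum, hfib]
      _ = z j := by simp only [hzj, hz']; rw [mul_div_assoc', mul_div_cancel_left₀ _ hden0.ne']; ring

end AuxEB

/-- Proposition 1, first part: with `(X i, T i)` i.i.d., `c(X)`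
integrable, `0 < P(T=1) < 1`, and every sup-norm box of radius `ε/2` centered at
`c* + (3/2)ε b` (`b ∈ {-1,0,1}^p`, `c* = E[c(X)∣T=1]`) having positive conditional
probability given `T = 0`, the probability that the Entropy Balancing constraints are
solvable — there exist strictly positive control weights summing to one whose weighted
control moment average equals the treated moment average — tends to `1` as `n → ∞`. -/
theorem stmt_15 {Ω 𝓧 : Type*} [m0 : MeasurableSpace Ω] [MeasurableSpace 𝓧]
    (μ : Measure Ω) [IsProbabilityMeasure μ]
    (X : ℕ → Ω → 𝓧) (T : ℕ → Ω → Bool)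
    (hXm : ∀ i, Measurable (X i)) (hTm : ∀ i, Measurable (T i))
    (hindep : iIndepFun (fun i ω => (X i ω, T i ω)) μ)
    (hident : ∀ i, μ.map (fun ω => (X i ω, T i ω)) = μ.map (fun ω => (X 0 ω, T 0 ω)))
    {p : ℕ} (c : 𝓧 → Fin p → ℝ) (hc : Measurable c)
    (hcint : Integrable (fun ω => c (X 0 ω)) μ)
    (hT1 : μ {ω | T 0 ω = true} ≠ 0) (hT0 : μ {ω | T 0 ω = false} ≠ 0)
    (cstar : Fin p → ℝ)
    (hcstar : ∀ j, cstar j = ∫ ω, c (X 0 ω) j ∂(μ[|{ω | T 0 ω = true}]))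
    (ε : ℝ) (hε : 0 < ε)
    (hbox : ∀ b : Fin p → ℝ, (∀ j, b j = -1 ∨ b j = 0 ∨ b j = 1) →
      0 < μ[|{ω | T 0 ω = false}]
        {ω | ∀ j, |c (X 0 ω) j - (cstar j + 3 / 2 * ε * b j)| ≤ ε / 2}) :
    Tendsto (fun n => μ {ω | ∃ w : ℕ → ℝ,
        (∀ i ∈ (Finset.range n).filter (fun i => T i ω = false), 0 < w i) ∧
        (∑ i ∈ (Finset.range n).filter (fun i => T i ω = false), w i = 1) ∧
        (∀ j, ∑ i ∈ (Finset.range n).filter (fun i => T i ω = false), w i * c (X i ω) j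
          = ((((Finset.range n).filter (fun i => T i ω = true)).card : ℝ))⁻¹ *
            ∑ i ∈ (Finset.range n).filter (fun i => T i ω = true), c (X i ω) j)})
      atTop (nhds 1) := by
  classical
  set pair : ℕ → Ω → 𝓧 × Bool := fun i ω => (X i ω, T i ω) with hpair
  have hpm : ∀ i, Measurable (pair i) := fun i => (hXm i).prodMk (hTm i)
  have hpid : ∀ i, IdentDistrib (pair i) (pair 0) μ μ := fun i =>
    ⟨(hpm i).aemeasurable, (hpm 0).aemeasurable, hident i⟩
  -- basic sets
  set A1 : Set (𝓧 × Bool) := {q | q.2 = true} with hA1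
  have hA1m : MeasurableSet A1 := measurable_snd (measurableSet_singleton true)
  set φg : 𝓧 × Bool → (Fin p → ℝ) := fun q => if q.2 = true then c q.1 else 0 with hφg
  have hφgm : Measurable φg := Measurable.ite hA1m (hc.comp measurable_fst) measurable_const
  set Box : (Fin p → Fin 3) → Set 𝓧 :=
    fun β => {x | ∀ j, |c x j - (cstar j + 3 / 2 * ε * sgn3 (β j))| ≤ ε / 2} with hBox
  have hBoxm : ∀ β, MeasurableSet (Box β) := by
    intro β
    have : Box β = ⋂ j, {x | |c x j - (cstar j + 3 / 2 * ε * sgn3 (β j))| ≤ ε / 2} := by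
      ext x; simp [hBox, Set.mem_iInter]
    rw [this]
    exact MeasurableSet.iInter fun j =>
      measurableSet_le (by fun_prop) measurable_const
  set D : (Fin p → Fin 3) → Set (𝓧 × Bool) := fun β => {q | q.2 = false ∧ q.1 ∈ Box β} with hD
  have hDm : ∀ β, MeasurableSet (D β) := fun β =>
    (measurable_snd (measurableSet_singleton false)).inter (measurable_fst (hBoxm β))
  -- the three sequences
  set f1 : ℕ → Ω → ℝ := fun i => (A1.indicator fun _ => (1:ℝ)) ∘ pair i with hf1
  set g : ℕ → Ω → (Fin p → ℝ) := fun i => φg ∘ pair i with hg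
  set hB : (Fin p → Fin 3) → ℕ → Ω → ℝ :=
    fun β i => ((D β).indicator fun _ => (1:ℝ)) ∘ pair i with hhB
  -- integrability at 0
  have hf1int : Integrable (f1 0) μ := by
    have : f1 0 = (pair 0 ⁻¹' A1).indicator (fun _ => (1:ℝ)) :=
      funext fun ω => (Set.indicator_comp_right (pair 0)).symm
    rw [this]
    exact (integrable_const 1).indicator ((hpm 0) hA1m)
  have hgint : Integrable (g 0) μ := by
    refine Integrable.mono' hcint.norm
      ((hφgm.comp (hpm 0)).aestronglyMeasurable) (Eventually.of_forall fun ω => ?_)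
    by_cases h : T 0 ω = true <;> simp [hg, hφg, hpair, h]
  have hBint : ∀ β, Integrable (hB β 0) μ := by
    intro β
    have : hB β 0 = (pair 0 ⁻¹' D β).indicator (fun _ => (1:ℝ)) :=
      funext fun ω => (Set.indicator_comp_right (pair 0)).symm
    rw [this]
    exact (integrable_const 1).indicator ((hpm 0) (hDm β))
  -- independence and identical distribution
  have hindep' : ∀ {E : Type} [MeasurableSpace E], ∀ φ : 𝓧 × Bool → E, Measurable φ →
      Pairwise (Function.onFun (fun f g => IndepFun f g μ) (fun i => φ ∘ pair i)) := by
    intro E _ φ hφ i j hij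
    exact (hindep.indepFun hij).comp hφ hφ
  -- SLLN
  have L1 := strong_law_ae f1 hf1int
    (hindep' _ ((measurable_const (a := (1:ℝ))).indicator hA1m))
    (fun i => (hpid i).comp ((measurable_const (a := (1:ℝ))).indicator hA1m))
  have Lg := strong_law_ae g hgint (hindep' _ hφgm) (fun i => (hpid i).comp hφgm)
  have LB : ∀ β, ∀ᵐ ω ∂μ, Tendsto
      (fun n : ℕ => (n:ℝ)⁻¹ • ∑ i ∈ Finset.range n, hB β i ω) atTop
      (𝓝 (∫ ω, hB β 0 ω ∂μ)) := fun β => strong_law_ae (hB β) (hBint β)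
    (hindep' _ ((measurable_const (a := (1:ℝ))).indicator (hDm β)))
    (fun i => (hpid i).comp ((measurable_const (a := (1:ℝ))).indicator (hDm β)))
  -- limit values
  set q1 : ℝ := (μ {ω | T 0 ω = true}).toReal with hq1
  have hq1pos : 0 < q1 := ENNReal.toReal_pos hT1 (measure_ne_top μ _)
  have hf1eq : ∫ ω, f1 0 ω ∂μ = q1 := by
    have h : f1 0 = (pair 0 ⁻¹' A1).indicator (fun _ => (1:ℝ)) :=
      funext fun ω => (Set.indicator_comp_right (pair 0)).symm
    rw [h, integral_indicator_const 1 ((hpm 0) hA1m), smul_eq_mul, mul_one]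
    rfl
  set m : Fin p → ℝ := ∫ ω, g 0 ω ∂μ with hm
  have hmj : ∀ j, m j = q1 * cstar j := by
    intro j
    have hproj : ∫ ω, (g 0 ω) j ∂μ = m j :=
      (ContinuousLinearMap.proj (R := ℝ) (φ := fun _ : Fin p => ℝ) j).integral_comp_comm hgint
    have hs : MeasurableSet {ω | T 0 ω = true} := (hTm 0) (measurableSet_singleton true)
    have hcond : (μ[|{ω | T 0 ω = true}])
        = (μ {ω | T 0 ω = true})⁻¹ • μ.restrict {ω | T 0 ω = true} := rfl
    have h2 : cstar j = q1⁻¹ * ∫ ω, (g 0 ω) j ∂μ := by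
      rw [hcstar j, hcond, integral_smul_measure, ENNReal.toReal_inv, smul_eq_mul, ← hq1]
      congr 1
      rw [← integral_indicator hs]
      congr 1
      funext ω
      by_cases h : T 0 ω = true <;>
        simp [Set.indicator_apply, h, hg, hφg, hpair]
    rw [hproj] at h2
    rw [h2]; field_simp
  set qB : (Fin p → Fin 3) → ℝ := fun β => (μ (pair 0 ⁻¹' D β)).toReal with hqB
  have hqBpos : ∀ β, 0 < qB β := by
    intro β
    have hsF : MeasurableSet {ω | T 0 ω = false} := (hTm 0) (measurableSet_singleton false)
    have hb := hbox (fun j => sgn3 (β j)) (fun j => sgn3_mem (β j))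
    rw [cond_apply hsF] at hb
    have hne : μ ({ω | T 0 ω = false} ∩
        {ω | ∀ j, |c (X 0 ω) j - (cstar j + 3 / 2 * ε * sgn3 (β j))| ≤ ε / 2}) ≠ 0 := by
      intro h0; rw [h0, mul_zero] at hb; exact lt_irrefl 0 hb
    have heq : pair 0 ⁻¹' D β = {ω | T 0 ω = false} ∩
        {ω | ∀ j, |c (X 0 ω) j - (cstar j + 3 / 2 * ε * sgn3 (β j))| ≤ ε / 2} := rfl
    rw [hqB]
    exact ENNReal.toReal_pos (by rw [heq]; exact hne) (measure_ne_top μ _)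
  have hBeq : ∀ β, ∫ ω, hB β 0 ω ∂μ = qB β := by
    intro β
    have h : hB β 0 = (pair 0 ⁻¹' D β).indicator (fun _ => (1:ℝ)) :=
      funext fun ω => (Set.indicator_comp_right (pair 0)).symm
    rw [h, integral_indicator_const 1 ((hpm 0) (hDm β)), smul_eq_mul, mul_one, hqB]
    rfl
  rw [hf1eq] at L1
  replace LB : ∀ β, ∀ᵐ ω ∂μ, Tendsto
      (fun n : ℕ => (n:ℝ)⁻¹ • ∑ i ∈ Finset.range n, hB β i ω) atTop (𝓝 (qB β)) := by
    intro β; have h := LB β; rwa [hBeq β] at h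
  have hae : ∀ᵐ ω ∂μ,
      (Tendsto (fun n : ℕ => (n:ℝ)⁻¹ • ∑ i ∈ Finset.range n, f1 i ω) atTop (𝓝 q1)) ∧
      (Tendsto (fun n : ℕ => (n:ℝ)⁻¹ • ∑ i ∈ Finset.range n, g i ω) atTop (𝓝 m)) ∧
      (∀ β, Tendsto (fun n : ℕ => (n:ℝ)⁻¹ • ∑ i ∈ Finset.range n, hB β i ω) atTop
        (𝓝 (qB β))) :=
    L1.and (Lg.and (ae_all_iff.2 LB))
  -- generic conclusion from a.e. eventual membership
  have key : ∀ (A : ℕ → Set Ω), (∀ᵐ ω ∂μ, ∀ᶠ n in atTop, ω ∈ A n) →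
      Tendsto (fun n => μ (A n)) atTop (𝓝 1) := by
    intro A hev
    set C : ℕ → Set Ω := fun n => {ω | ∀ m, n ≤ m → ω ∈ A m} with hC
    have hmono : Monotone C := fun n n' hnn' ω hω m hm => hω m (le_trans hnn' hm)
    have hCA : ∀ n, C n ⊆ A n := fun n ω hω => hω n le_rfl
    have hUC : μ (⋃ n, C n) = 1 := by
      have hsub : ∀ᵐ ω ∂μ, ω ∈ ⋃ n, C n := by
        filter_upwards [hev] with ω hω
        obtain ⟨n, hn⟩ := eventually_atTop.1 hω
        exact Set.mem_iUnion.2 ⟨n, fun m hm => hn m hm⟩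
      have h0 : μ {ω | ¬ ω ∈ ⋃ n, C n} = 0 := ae_iff.1 hsub
      refine le_antisymm prob_le_one ?_
      calc (1:ENNReal) = μ Set.univ := measure_univ.symm
        _ ≤ μ (⋃ n, C n) + μ {ω | ¬ ω ∈ ⋃ n, C n} := by
            refine le_trans (measure_mono ?_) (measure_union_le _ _)
            intro ω _
            by_cases h : ω ∈ ⋃ n, C n
            · exact Set.mem_union_left _ h
            · exact Set.mem_union_right _ h
        _ = μ (⋃ n, C n) := by rw [h0, add_zero]
    have hlim : Tendsto (fun n => μ (C n)) atTop (𝓝 1) := by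
      have ht := tendsto_measure_iUnion_atTop (μ := μ) hmono
      rw [hUC] at ht
      exact ht
    exact tendsto_of_tendsto_of_tendsto_of_le_of_le hlim tendsto_const_nhds
      (fun n => measure_mono (hCA n)) (fun n => prob_le_one)
  refine key _ ?_
  filter_upwards [hae] with ω hω
  obtain ⟨h1, hg2, hB2⟩ := hω
  have hsum1 : ∀ n : ℕ, ∑ i ∈ Finset.range n, f1 i ω
      = (((Finset.range n).filter (fun i => T i ω = true)).card : ℝ) := by
    intro n
    rw [← Finset.sum_boole]
    exact Finset.sum_congr rfl fun i _ => by
      by_cases h : T i ω = true <;> simp [hf1, Set.indicator_apply, hA1, hpair, h]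
  have h1' : Tendsto (fun n : ℕ =>
      (n:ℝ)⁻¹ * (((Finset.range n).filter (fun i => T i ω = true)).card : ℝ))
      atTop (𝓝 q1) :=
    h1.congr fun n => by rw [smul_eq_mul, hsum1 n]
  have havgj : ∀ j, ∀ᶠ n in atTop,
      |(((Finset.range n).filter (fun i => T i ω = true)).card : ℝ)⁻¹ *
        (∑ i ∈ (Finset.range n).filter (fun i => T i ω = true), c (X i ω) j) - cstar j|
        ≤ ε / 4 := by
    intro j
    have hgj : Tendsto (fun n : ℕ => (n:ℝ)⁻¹ * ∑ i ∈ Finset.range n, (g i ω) j)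
        atTop (𝓝 (m j)) := by
      have hc2 := ((continuous_apply j).tendsto m).comp hg2
      refine hc2.congr fun n => ?_
      simp [Finset.sum_apply, smul_eq_mul]
    have hdiv := hgj.div h1' hq1pos.ne'
    have hlimval : m j / q1 = cstar j := by rw [hmj j]; field_simp
    have heq : (fun n : ℕ => ((n:ℝ)⁻¹ * ∑ i ∈ Finset.range n, (g i ω) j) /
          ((n:ℝ)⁻¹ * (((Finset.range n).filter (fun i => T i ω = true)).card : ℝ)))
        =ᶠ[atTop] (fun n : ℕ =>
          (((Finset.range n).filter (fun i => T i ω = true)).card : ℝ)⁻¹ *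
          ∑ i ∈ (Finset.range n).filter (fun i => T i ω = true), c (X i ω) j) := by
      filter_upwards [eventually_gt_atTop 0] with n hn
      have hninv : ((n:ℝ))⁻¹ ≠ 0 := inv_ne_zero (Nat.cast_ne_zero.2 hn.ne')
      have hsf : ∑ i ∈ (Finset.range n).filter (fun i => T i ω = true), c (X i ω) j
          = ∑ i ∈ Finset.range n, (g i ω) j := by
        rw [Finset.sum_filter]
        refine Finset.sum_congr rfl fun i _ => ?_
        by_cases h : T i ω = true <;> simp [hg, hφg, hpair, h]
      rw [hsf, mul_div_mul_left _ _ hninv, div_eq_inv_mul]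
    have hfin : Tendsto (fun n : ℕ =>
        (((Finset.range n).filter (fun i => T i ω = true)).card : ℝ)⁻¹ *
        ∑ i ∈ (Finset.range n).filter (fun i => T i ω = true), c (X i ω) j)
        atTop (𝓝 (cstar j)) := by
      rw [← hlimval]
      exact hdiv.congr' heq
    have hm4 := Metric.tendsto_nhds.1 hfin (ε/4) (by positivity)
    filter_upwards [hm4] with n hn
    rw [Real.dist_eq] at hn; exact hn.le
  have hboxev : ∀ β : Fin p → Fin 3, ∀ᶠ n in atTop,
      ∃ i ∈ (Finset.range n).filter (fun i => T i ω = false),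
        ∀ j, |c (X i ω) j - (cstar j + 3 / 2 * ε * sgn3 (β j))| ≤ ε / 2 := by
    intro β
    have hpos := (hB2 β).eventually (eventually_gt_nhds (hqBpos β))
    filter_upwards [hpos] with n hn
    by_contra hcon
    push_neg at hcon
    have hz : ∀ i ∈ Finset.range n, hB β i ω = 0 := by
      intro i hi
      refine Set.indicator_of_notMem ?_ _
      intro hmem
      obtain ⟨ht, hbx⟩ := hmem
      obtain ⟨j, hj⟩ := hcon i (Finset.mem_filter.2 ⟨hi, ht⟩)
      exact absurd (hbx j) (not_le.2 hj)
    rw [Finset.sum_eq_zero hz, smul_zero] at hn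
    exact lt_irrefl 0 hn
  filter_upwards [(eventually_all.2 havgj).and (eventually_all.2 hboxev)]
    with n hn
  obtain ⟨havg, hbox2⟩ := hn
  obtain ⟨w, hw1, hw2, hw3⟩ := weightsB cstar ε hε
    ((Finset.range n).filter (fun i => T i ω = false))
    (fun i => c (X i ω))
    (fun j => (((Finset.range n).filter (fun i => T i ω = true)).card : ℝ)⁻¹ *
      ∑ i ∈ (Finset.range n).filter (fun i => T i ω = true), c (X i ω) j)
    (fun j => havg j)
    (fun b => hbox2 b)
  exact ⟨w, hw1, hw2, fun j => hw3 j⟩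
end

section
/- Under the same assumptions as in the existence result — $(X_i, T_i)$ i.i.d., $\mathbb{E}\|c(X)\| < \infty$, $0 < P(T=1) < 1$, and every box $R_b$ of sup-norm radius $\epsilon/2$ centered at $c^* + \tfrac{3}{2}\epsilon\, b$ ($b \in \{-1,0,1\}^p$, $c^* = \mathbb{E}[c(X)|T=1]$) having positive conditional probability given $T=0$ — the following holds: for every $\delta > 0$, the probability that there exist feasible weights $w$ (i.e., $w_i > 0$, $\sum_{T_i=0, i\le n} w_i = 1$, $\sum_{T_i=0, i \le n} w_i c(X_i) = \frac{1}{n_1}\sum_{T_i=1, i\le n} c(X_i)$) with $\max_i w_i < \delta$ (and hence $\sum_{T_i=0} w_i^2 < \delta$) tends to $1$ as $n \to \infty$. -/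
open MeasureTheory ProbabilityTheory Filter Finset

open Topology

set_option maxHeartbeats 2000000


lemma sum_pi_bool_succ {p : ℕ} (g : (Fin (p+1) → Bool) → ℝ) :
    ∑ b, g b = ∑ b' : Fin p → Bool, (g (Fin.cons true b') + g (Fin.cons false b')) := by
  rw [← (Fin.consEquiv (fun _ : Fin (p+1) => Bool)).sum_comp g]
  rw [Fintype.sum_prod_type, Fintype.sum_bool]
  rw [← Finset.sum_add_distrib]
  rfl

/-- Convex hull of a perturbed hypercube grid contains the shrunken cube. -/
theorem gridHull : ∀ (p : ℕ) (r s : ℝ), 0 ≤ s → s < r →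
    ∀ (x : (Fin p → Bool) → (Fin p → ℝ)),
    (∀ b j, |x b j - r * (if b j then 1 else -1)| ≤ s) →
    ∀ y : Fin p → ℝ, (∀ j, |y j| ≤ r - s) →
    ∃ lam : (Fin p → Bool) → ℝ, (∀ b, 0 ≤ lam b) ∧ (∑ b, lam b = 1) ∧
      (∀ j, ∑ b, lam b * x b j = y j) := by
  intro p
  induction p with
  | zero =>
    intro r s hs hsr x hx y hy
    refine ⟨fun _ => 1, fun _ => zero_le_one, ?_, fun j => j.elim0⟩
    rw [Fintype.sum_unique]
  | succ p IH =>
    intro r s hs hsr x hx y hy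
    have hP0 : ∀ b', r - s ≤ x (Fin.cons true b') 0 := by
      intro b'
      have h := hx (Fin.cons true b') 0
      rw [Fin.cons_zero] at h
      norm_num at h
      have := abs_le.1 h
      linarith [this.1]
    have hM0 : ∀ b', x (Fin.cons false b') 0 ≤ -(r - s) := by
      intro b'
      have h := hx (Fin.cons false b') 0
      rw [Fin.cons_zero] at h
      norm_num at h
      have := abs_le.1 h
      linarith [this.2]
    have hdenpos : ∀ b', 0 < x (Fin.cons true b') 0 - x (Fin.cons false b') 0 := by
      intro b'
      have h1 := hP0 b'; have h2 := hM0 b'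
      linarith
    set t : (Fin p → Bool) → ℝ :=
      fun b' => (y 0 - x (Fin.cons false b') 0) /
        (x (Fin.cons true b') 0 - x (Fin.cons false b') 0) with htdef
    have hy0 := abs_le.1 (hy 0)
    have ht0 : ∀ b', 0 ≤ t b' := by
      intro b'
      apply div_nonneg _ (le_of_lt (hdenpos b'))
      have := hM0 b'; linarith [hy0.1]
    have ht1 : ∀ b', t b' ≤ 1 := by
      intro b'
      rw [htdef]
      simp only
      rw [div_le_one (hdenpos b')]
      have := hP0 b'; linarith [hy0.2]
    have htsolve : ∀ b', t b' * x (Fin.cons true b') 0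
        + (1 - t b') * x (Fin.cons false b') 0 = y 0 := by
      intro b'
      have h := (hdenpos b').ne'
      rw [htdef]
      field_simp
      ring
    set z : (Fin p → Bool) → Fin p → ℝ :=
      fun b' j => t b' * x (Fin.cons true b') j.succ
        + (1 - t b') * x (Fin.cons false b') j.succ with hzdef
    have hz : ∀ b' j, |z b' j - r * (if b' j then 1 else -1)| ≤ s := by
      intro b' j
      have hP := hx (Fin.cons true b') j.succ
      have hM := hx (Fin.cons false b') j.succ
      rw [Fin.cons_succ] at hP hM
      have h0 := ht0 b'; have h1 := ht1 b'
      have heq : z b' j - r * (if b' j then 1 else -1)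
          = t b' * (x (Fin.cons true b') j.succ - r * (if b' j then 1 else -1))
            + (1 - t b') * (x (Fin.cons false b') j.succ - r * (if b' j then 1 else -1)) := by
        rw [hzdef]; ring
      rw [heq]
      calc |t b' * (x (Fin.cons true b') j.succ - r * (if b' j then 1 else -1))
            + (1 - t b') * (x (Fin.cons false b') j.succ - r * (if b' j then 1 else -1))|
          ≤ |t b' * (x (Fin.cons true b') j.succ - r * (if b' j then 1 else -1))|
            + |(1 - t b') * (x (Fin.cons false b') j.succ - r * (if b' j then 1 else -1))| :=
            abs_add_le _ _
        _ ≤ t b' * s + (1 - t b') * s := by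
            rw [abs_mul, abs_mul, abs_of_nonneg h0,
              abs_of_nonneg (by linarith : (0:ℝ) ≤ 1 - t b')]
            gcongr <;> first | exact hP | exact hM | linarith
        _ = s := by ring
    obtain ⟨lam', hlam'0, hlam'1, hlam'bal⟩ :=
      IH r s hs hsr z hz (fun j => y j.succ) (fun j => hy j.succ)
    refine ⟨fun b => lam' (Fin.tail b) * (cond (b 0) (t (Fin.tail b)) (1 - t (Fin.tail b))),
      ?_, ?_, ?_⟩
    · intro b
      apply mul_nonneg (hlam'0 _)
      cases h : b 0
      · simp only [cond_false]; linarith [ht1 (Fin.tail b)]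
      · simp only [cond_true]; exact ht0 _
    · rw [sum_pi_bool_succ]
      simp only [Fin.cons_zero, Fin.tail_cons, cond_true, cond_false]
      calc ∑ b' : Fin p → Bool, (lam' b' * t b' + lam' b' * (1 - t b'))
          = ∑ b' : Fin p → Bool, lam' b' :=
            Finset.sum_congr rfl (fun b' _ => by ring)
        _ = 1 := hlam'1
    · intro k
      rw [sum_pi_bool_succ]
      simp only [Fin.cons_zero, Fin.tail_cons, cond_true, cond_false]
      induction k using Fin.cases with
      | zero =>
        have key : ∀ b' : Fin p → Bool,
            lam' b' * t b' * x (Fin.cons true b') 0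
              + lam' b' * (1 - t b') * x (Fin.cons false b') 0 = lam' b' * y 0 := by
          intro b'
          have h := htsolve b'
          calc lam' b' * t b' * x (Fin.cons true b') 0
              + lam' b' * (1 - t b') * x (Fin.cons false b') 0
              = lam' b' * (t b' * x (Fin.cons true b') 0
                + (1 - t b') * x (Fin.cons false b') 0) := by ring
            _ = lam' b' * y 0 := by rw [h]
        calc ∑ b' : Fin p → Bool, (lam' b' * t b' * x (Fin.cons true b') 0
              + lam' b' * (1 - t b') * x (Fin.cons false b') 0)
            = ∑ b' : Fin p → Bool, lam' b' * y 0 :=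
              Finset.sum_congr rfl (fun b' _ => key b')
          _ = (∑ b' : Fin p → Bool, lam' b') * y 0 := by rw [Finset.sum_mul]
          _ = y 0 := by rw [hlam'1, one_mul]
      | succ j =>
        have key : ∀ b' : Fin p → Bool,
            lam' b' * t b' * x (Fin.cons true b') j.succ
              + lam' b' * (1 - t b') * x (Fin.cons false b') j.succ
              = lam' b' * z b' j := by
          intro b'
          rw [hzdef]
          ring
        calc ∑ b' : Fin p → Bool, (lam' b' * t b' * x (Fin.cons true b') j.succ
              + lam' b' * (1 - t b') * x (Fin.cons false b') j.succ)
            = ∑ b' : Fin p → Bool, lam' b' * z b' j :=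
              Finset.sum_congr rfl (fun b' _ => key b')
          _ = y j.succ := hlam'bal j

lemma weightsOfGood {p : ℕ} (cstar : Fin p → ℝ) (ε : ℝ) (hε : 0 < ε)
    (δ B : ℝ) (hδ : 0 < δ) (hB : 0 < B) (K : ℕ) (hK : 2 / δ < (K : ℝ))
    (S : Finset ℕ) (f : ℕ → Fin p → ℝ) (y : Fin p → ℝ)
    (hcorners : ∀ b : Fin p → Bool, K ≤ (S.filter (fun i => ∀ j,
      |f i j - (cstar j + 3/2 * ε * (if b j then 1 else -1))| ≤ ε/2)).card)
    (hy : ∀ j, |y j - cstar j| ≤ ε/2)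
    (hu : ∀ j, |(S.card : ℝ)⁻¹ * ∑ i ∈ S, f i j - cstar j| ≤ B) :
    ∃ w : ℕ → ℝ, (∀ i ∈ S, 0 < w i) ∧ (∑ i ∈ S, w i = 1) ∧
      (∀ j, ∑ i ∈ S, w i * f i j = y j) ∧ (∀ i ∈ S, w i < δ) ∧ (∑ i ∈ S, w i ^ 2 < δ) := by
  have hKR : (0:ℝ) < K := lt_trans (by positivity) hK
  have hK0 : 0 < K := by exact_mod_cast hKR
  set Sb : (Fin p → Bool) → Finset ℕ := fun b => S.filter (fun i => ∀ j,
      |f i j - (cstar j + 3/2 * ε * (if b j then 1 else -1))| ≤ ε/2) with hSbdef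
  have hSbsub : ∀ b, Sb b ⊆ S := fun b => Finset.filter_subset _ _
  have hSbcard : ∀ b, 0 < (Sb b).card := fun b => lt_of_lt_of_le hK0 (hcorners b)
  have hSbR : ∀ b, (0:ℝ) < (Sb b).card := fun b => by exact_mod_cast hSbcard b
  have hScard : 0 < S.card :=
    lt_of_lt_of_le (hSbcard (fun _ => true)) (Finset.card_le_card (hSbsub _))
  have hSR : (0:ℝ) < S.card := by exact_mod_cast hScard
  have hSKR : (K:ℝ) ≤ (S.card : ℝ) := by
    exact_mod_cast le_trans (hcorners (fun _ => true))
      (Finset.card_le_card (hSbsub (fun _ => true)))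
  have hKinv : ((K:ℝ))⁻¹ < δ / 2 := by
    rw [inv_eq_one_div, div_lt_div_iff₀ hKR (by norm_num : (0:ℝ) < 2)]
    rw [div_lt_iff₀ hδ] at hK
    linarith
  -- averages over boxes
  set m : (Fin p → Bool) → Fin p → ℝ :=
    fun b j => ((Sb b).card : ℝ)⁻¹ * ∑ i ∈ Sb b, f i j with hmdef
  have hm : ∀ b j, |m b j - (cstar j + 3/2 * ε * (if b j then 1 else -1))| ≤ ε/2 := by
    intro b j
    set cen := cstar j + 3/2 * ε * (if b j then 1 else -1) with hcen
    have h1 : m b j - cen = ((Sb b).card : ℝ)⁻¹ * ∑ i ∈ Sb b, (f i j - cen) := by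
      rw [Finset.sum_sub_distrib, Finset.sum_const, nsmul_eq_mul, mul_sub, ← mul_assoc,
        inv_mul_cancel₀ (hSbR b).ne', one_mul]
    rw [h1, abs_mul, abs_of_nonneg (le_of_lt (inv_pos.2 (hSbR b)))]
    calc (((Sb b).card : ℝ))⁻¹ * |∑ i ∈ Sb b, (f i j - cen)|
        ≤ (((Sb b).card : ℝ))⁻¹ * ∑ i ∈ Sb b, |f i j - cen| := by
          apply mul_le_mul_of_nonneg_left (Finset.abs_sum_le_sum_abs _ _)
          positivity
      _ ≤ (((Sb b).card : ℝ))⁻¹ * ∑ i ∈ Sb b, (ε/2) := by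
          apply mul_le_mul_of_nonneg_left _ (by positivity)
          apply Finset.sum_le_sum
          intro i hi
          exact (Finset.mem_filter.1 hi).2 j
      _ = (((Sb b).card : ℝ))⁻¹ * ((Sb b).card * (ε/2)) := by
          rw [Finset.sum_const, nsmul_eq_mul]
      _ = ε/2 := by
          rw [← mul_assoc, inv_mul_cancel₀ (hSbR b).ne', one_mul]
  -- mixing parameter
  set α : ℝ := ε / (2 * (B + ε)) with hαdef
  have hα0 : 0 < α := by positivity
  have hα1 : α < 1 := by
    rw [hαdef, div_lt_one (by positivity)]
    linarith
  have h1α : (0:ℝ) < 1 - α := by linarith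
  set ubar : Fin p → ℝ := fun j => (S.card : ℝ)⁻¹ * ∑ i ∈ S, f i j with hubardef
  set z : Fin p → ℝ := fun j => (y j - α * ubar j) / (1 - α) with hzdef
  have hkey : ε/2 + α * B = ε * (1 - α) := by
    rw [hαdef]
    field_simp
    ring
  have hz : ∀ j, |z j - cstar j| ≤ ε := by
    intro j
    have h1 : z j - cstar j = ((y j - cstar j) - α * (ubar j - cstar j)) / (1 - α) := by
      rw [hzdef]
      simp only
      field_simp
      ring
    rw [h1, abs_div, abs_of_pos h1α, div_le_iff₀ h1α]
    calc |(y j - cstar j) - α * (ubar j - cstar j)|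
        ≤ |y j - cstar j| + |α * (ubar j - cstar j)| := abs_sub _ _
      _ = |y j - cstar j| + α * |ubar j - cstar j| := by
          rw [abs_mul, abs_of_pos hα0]
      _ ≤ ε/2 + α * B := by
          have h2 := hy j
          have h3 := hu j
          have h4 : α * |ubar j - cstar j| ≤ α * B :=
            mul_le_mul_of_nonneg_left h3 (le_of_lt hα0)
          linarith
      _ = ε * (1 - α) := hkey
  -- apply gridHull
  obtain ⟨lam, hlam0, hlam1, hlambal⟩ := gridHull p (3/2 * ε) (ε/2)
    (by positivity) (by linarith)
    (fun b j => m b j - cstar j)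
    (by
      intro b j
      have h2 : m b j - cstar j - 3/2 * ε * (if b j then 1 else -1)
          = m b j - (cstar j + 3/2 * ε * (if b j then 1 else -1)) := by ring
      rw [h2]
      exact hm b j)
    (fun j => z j - cstar j)
    (by
      intro j
      have h2 : (3:ℝ)/2 * ε - ε/2 = ε := by ring
      rw [h2]
      exact hz j)
  have hlambal' : ∀ j, ∑ b, lam b * m b j = z j := by
    intro j
    have h := hlambal j
    have h2 : ∑ b, lam b * (m b j - cstar j)
        = (∑ b, lam b * m b j) - (∑ b, lam b) * cstar j := by
      rw [Finset.sum_mul, ← Finset.sum_sub_distrib]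
      exact Finset.sum_congr rfl (fun b _ => by ring)
    rw [h2, hlam1, one_mul] at h
    linarith
  -- the inner weights v
  set v : ℕ → ℝ := fun i => ∑ b, lam b * (if i ∈ Sb b then ((Sb b).card : ℝ)⁻¹ else 0)
    with hvdef
  have hv0 : ∀ i, 0 ≤ v i := by
    intro i
    apply Finset.sum_nonneg
    intro b _
    apply mul_nonneg (hlam0 b)
    split <;> positivity
  have hinner : ∀ b, ∑ i ∈ S, (if i ∈ Sb b then ((Sb b).card : ℝ)⁻¹ else 0) = 1 := by
    intro b
    rw [Finset.sum_ite_mem, Finset.inter_eq_right.2 (hSbsub b), Finset.sum_const,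
      nsmul_eq_mul, mul_inv_cancel₀ (hSbR b).ne']
  have hvsum : ∑ i ∈ S, v i = 1 := by
    rw [hvdef]
    simp only
    rw [Finset.sum_comm]
    calc ∑ b, ∑ i ∈ S, lam b * (if i ∈ Sb b then ((Sb b).card : ℝ)⁻¹ else 0)
        = ∑ b, lam b := by
          apply Finset.sum_congr rfl
          intro b _
          rw [← Finset.mul_sum, hinner b, mul_one]
      _ = 1 := hlam1
  have hvbal : ∀ j, ∑ i ∈ S, v i * f i j = z j := by
    intro j
    have h1 : ∀ i, v i * f i j
        = ∑ b, lam b * ((if i ∈ Sb b then ((Sb b).card : ℝ)⁻¹ else 0) * f i j) := by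
      intro i
      rw [hvdef]
      simp only
      rw [Finset.sum_mul]
      apply Finset.sum_congr rfl
      intro b _
      ring
    rw [Finset.sum_congr rfl (fun i _ => h1 i), Finset.sum_comm]
    calc ∑ b, ∑ i ∈ S, lam b * ((if i ∈ Sb b then ((Sb b).card : ℝ)⁻¹ else 0) * f i j)
        = ∑ b, lam b * m b j := by
          apply Finset.sum_congr rfl
          intro b _
          rw [← Finset.mul_sum]
          congr 1
          have h2 : ∀ i, (if i ∈ Sb b then ((Sb b).card : ℝ)⁻¹ else 0) * f i j
              = (if i ∈ Sb b then ((Sb b).card : ℝ)⁻¹ * f i j else 0) := by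
            intro i
            split <;> simp
          rw [Finset.sum_congr rfl (fun i _ => h2 i), Finset.sum_ite_mem,
            Finset.inter_eq_right.2 (hSbsub b), hmdef]
          simp only
          rw [Finset.mul_sum]
      _ = z j := hlambal' j
  have hvK : ∀ i, v i ≤ ((K:ℝ))⁻¹ := by
    intro i
    calc v i ≤ ∑ b, lam b * ((K:ℝ))⁻¹ := by
          apply Finset.sum_le_sum
          intro b _
          apply mul_le_mul_of_nonneg_left _ (hlam0 b)
          split
          · next h =>
            apply inv_anti₀ hKR
            exact Nat.cast_le.mpr (hcorners b)
          · positivity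
      _ = ((K:ℝ))⁻¹ := by rw [← Finset.sum_mul, hlam1, one_mul]
  -- final weights
  refine ⟨fun i => α * ((S.card : ℝ))⁻¹ + (1 - α) * v i, ?_, ?_, ?_, ?_, ?_⟩
  · intro i _
    have h1 : 0 < α * ((S.card : ℝ))⁻¹ := by positivity
    have h2 : 0 ≤ (1 - α) * v i := mul_nonneg (le_of_lt h1α) (hv0 i)
    linarith
  · rw [Finset.sum_add_distrib, Finset.sum_const, nsmul_eq_mul, ← Finset.mul_sum, hvsum]
    rw [← mul_assoc, mul_comm (S.card : ℝ) α, mul_assoc, mul_inv_cancel₀ hSR.ne']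
    ring
  · intro j
    have h1 : ∀ i, (α * ((S.card : ℝ))⁻¹ + (1 - α) * v i) * f i j
        = α * (((S.card : ℝ))⁻¹ * f i j) + (1 - α) * (v i * f i j) := by
      intro i; ring
    rw [Finset.sum_congr rfl (fun i _ => h1 i), Finset.sum_add_distrib,
      ← Finset.mul_sum, ← Finset.mul_sum, ← Finset.mul_sum, hvbal j]
    have h2 : (1 - α) * z j = y j - α * ubar j := by
      rw [hzdef]
      simp only
      field_simp
    rw [h2, hubardef]
    ring
  · intro i _
    have h1 : α * ((S.card : ℝ))⁻¹ + (1 - α) * v i ≤ ((K:ℝ))⁻¹ := by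
      have h2 : ((S.card : ℝ))⁻¹ ≤ ((K:ℝ))⁻¹ := inv_anti₀ hKR hSKR
      have h3 : (1 - α) * v i ≤ (1 - α) * ((K:ℝ))⁻¹ :=
        mul_le_mul_of_nonneg_left (hvK i) (le_of_lt h1α)
      have h4 : α * ((S.card : ℝ))⁻¹ ≤ α * ((K:ℝ))⁻¹ :=
        mul_le_mul_of_nonneg_left h2 (le_of_lt hα0)
      nlinarith
    linarith [hKinv, hδ]
  · have hwle : ∀ i, α * ((S.card : ℝ))⁻¹ + (1 - α) * v i ≤ ((K:ℝ))⁻¹ := by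
      intro i
      have h2 : ((S.card : ℝ))⁻¹ ≤ ((K:ℝ))⁻¹ := inv_anti₀ hKR hSKR
      have h3 : (1 - α) * v i ≤ (1 - α) * ((K:ℝ))⁻¹ :=
        mul_le_mul_of_nonneg_left (hvK i) (le_of_lt h1α)
      have h4 : α * ((S.card : ℝ))⁻¹ ≤ α * ((K:ℝ))⁻¹ :=
        mul_le_mul_of_nonneg_left h2 (le_of_lt hα0)
      nlinarith
    have hwpos : ∀ i, 0 ≤ α * ((S.card : ℝ))⁻¹ + (1 - α) * v i := by
      intro i
      have h1 : 0 ≤ α * ((S.card : ℝ))⁻¹ := by positivity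
      have h2 : 0 ≤ (1 - α) * v i := mul_nonneg (le_of_lt h1α) (hv0 i)
      linarith
    calc ∑ i ∈ S, (α * ((S.card : ℝ))⁻¹ + (1 - α) * v i) ^ 2
        ≤ ∑ i ∈ S, (α * ((S.card : ℝ))⁻¹ + (1 - α) * v i) * ((K:ℝ))⁻¹ := by
          apply Finset.sum_le_sum
          intro i _
          rw [pow_two]
          exact mul_le_mul_of_nonneg_left (hwle i) (hwpos i)
      _ = ((K:ℝ))⁻¹ := by
          rw [← Finset.sum_mul]
          rw [show ∑ i ∈ S, (α * ((S.card : ℝ))⁻¹ + (1 - α) * v i) = 1 from ?_, one_mul]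
          rw [Finset.sum_add_distrib, Finset.sum_const, nsmul_eq_mul, ← Finset.mul_sum, hvsum]
          rw [← mul_assoc, mul_comm (S.card : ℝ) α, mul_assoc, mul_inv_cancel₀ hSR.ne']
          ring
      _ < δ := by linarith [hKinv, hδ]

lemma slln_pair {Ω 𝓧 : Type*} [MeasurableSpace Ω] [MeasurableSpace 𝓧]
    (μ : Measure Ω) (X : ℕ → Ω → 𝓧) (T : ℕ → Ω → Bool)
    (hXm : ∀ i, Measurable (X i)) (hTm : ∀ i, Measurable (T i))
    (hindep : iIndepFun (fun i ω => (X i ω, T i ω)) μ)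
    (hident : ∀ i, μ.map (fun ω => (X i ω, T i ω)) = μ.map (fun ω => (X 0 ω, T 0 ω)))
    (F : 𝓧 × Bool → ℝ) (hF : Measurable F)
    (hFint : Integrable (fun ω => F (X 0 ω, T 0 ω)) μ) :
    ∀ᵐ ω ∂μ, Tendsto (fun n : ℕ => (∑ i ∈ Finset.range n, F (X i ω, T i ω)) / n) atTop
      (𝓝 (∫ ω, F (X 0 ω, T 0 ω) ∂μ)) := by
  have hpm : ∀ i, Measurable fun ω => (X i ω, T i ω) := fun i => (hXm i).prodMk (hTm i)
  have hid : ∀ i, IdentDistrib (fun ω => F (X i ω, T i ω)) (fun ω => F (X 0 ω, T 0 ω)) μ μ := by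
    intro i
    have h0 : IdentDistrib (fun ω => (X i ω, T i ω)) (fun ω => (X 0 ω, T 0 ω)) μ μ :=
      ⟨(hpm i).aemeasurable, (hpm 0).aemeasurable, hident i⟩
    exact h0.comp hF
  have hind : Pairwise (Function.onFun (IndepFun · · μ) (fun i ω => F (X i ω, T i ω))) := by
    intro i j hij
    exact (hindep.indepFun hij).comp hF hF
  exact strong_law_ae_real _ hFint hind hid

lemma ratio_eventually_close (a bq : ℕ → ℝ) (A P : ℝ) (hP : 0 < P)
    (ha : Tendsto (fun n => a n / n) atTop (𝓝 (P * A)))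
    (hb : Tendsto (fun n => bq n / n) atTop (𝓝 P)) (e : ℝ) (he : 0 < e) :
    ∀ᶠ n : ℕ in atTop, |(bq n)⁻¹ * a n - A| ≤ e := by
  have h1 : Tendsto (fun n : ℕ => (a n / n) / (bq n / n)) atTop (𝓝 (P * A / P)) :=
    ha.div hb hP.ne'
  rw [mul_div_cancel_left₀ A hP.ne'] at h1
  have h2 : ∀ᶠ n : ℕ in atTop, |(a n / n) / (bq n / n) - A| ≤ e := by
    have h3 := h1.eventually (Metric.closedBall_mem_nhds A he)
    filter_upwards [h3] with n hn
    rw [Real.dist_eq] at hn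
    exact hn
  have h3 : ∀ᶠ n : ℕ in atTop, P/2 < bq n / n := hb.eventually (lt_mem_nhds (by linarith))
  have h4 : ∀ᶠ n : ℕ in atTop, 1 ≤ n := eventually_ge_atTop 1
  filter_upwards [h2, h3, h4] with n h2 h3 h4
  have hn : (0:ℝ) < n := by exact_mod_cast h4
  have h5 : 0 < bq n / n := lt_trans (by linarith) h3
  have h6 : 0 < bq n := by
    have := mul_pos h5 hn
    rwa [div_mul_cancel₀ _ hn.ne'] at this
  have h7 : (bq n)⁻¹ * a n = (a n / n) / (bq n / n) := by
    rw [div_div_div_cancel_right₀ hn.ne']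
    rw [inv_mul_eq_div]
  rw [h7]
  exact h2

lemma count_eventually_ge (a : ℕ → ℝ) (P : ℝ) (hP : 0 < P)
    (ha : Tendsto (fun n => a n / n) atTop (𝓝 P)) (Kr : ℝ) :
    ∀ᶠ n : ℕ in atTop, Kr ≤ a n := by
  have h3 : ∀ᶠ n : ℕ in atTop, P/2 < a n / n := ha.eventually (lt_mem_nhds (by linarith))
  have h4 : ∀ᶠ n : ℕ in atTop, (⌈Kr * 2 / P⌉₊ + 1 : ℕ) ≤ n := eventually_ge_atTop _
  filter_upwards [h3, h4] with n h3 h4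
  have hn1 : (⌈Kr * 2 / P⌉₊ : ℝ) + 1 ≤ (n:ℝ) := by exact_mod_cast h4
  have hn : (0:ℝ) < n := by
    have := Nat.cast_nonneg (α := ℝ) ⌈Kr * 2 / P⌉₊
    linarith
  have h5 : Kr * 2 / P ≤ (n:ℝ) := le_trans (Nat.le_ceil _) (by linarith)
  have h6 : P/2 * n < a n := (lt_div_iff₀ hn).mp h3
  have h7 : Kr * 2 ≤ (n:ℝ) * P := (div_le_iff₀ hP).mp h5
  nlinarith

/-- Proposition 1, second part: under the same assumptions as the
existence result, for every `δ > 0` the probability that there exist feasible Entropy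
Balancing weights (strictly positive, summing to one, exactly balancing the treated
moment average) with `max_i w i < δ` — and hence `∑ i (w i)^2 < δ` — tends to `1`
as `n → ∞`. -/
theorem stmt_16 {Ω 𝓧 : Type*} [m0 : MeasurableSpace Ω] [MeasurableSpace 𝓧]
    (μ : Measure Ω) [IsProbabilityMeasure μ]
    (X : ℕ → Ω → 𝓧) (T : ℕ → Ω → Bool)
    (hXm : ∀ i, Measurable (X i)) (hTm : ∀ i, Measurable (T i))
    (hindep : iIndepFun (fun i ω => (X i ω, T i ω)) μ)
    (hident : ∀ i, μ.map (fun ω => (X i ω, T i ω)) = μ.map (fun ω => (X 0 ω, T 0 ω)))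
    {p : ℕ} (c : 𝓧 → Fin p → ℝ) (hc : Measurable c)
    (hcint : Integrable (fun ω => c (X 0 ω)) μ)
    (hT1 : μ {ω | T 0 ω = true} ≠ 0) (hT0 : μ {ω | T 0 ω = false} ≠ 0)
    (cstar : Fin p → ℝ)
    (hcstar : ∀ j, cstar j = ∫ ω, c (X 0 ω) j ∂(μ[|{ω | T 0 ω = true}]))
    (ε : ℝ) (hε : 0 < ε)
    (hbox : ∀ b : Fin p → ℝ, (∀ j, b j = -1 ∨ b j = 0 ∨ b j = 1) →
      0 < μ[|{ω | T 0 ω = false}]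
        {ω | ∀ j, |c (X 0 ω) j - (cstar j + 3 / 2 * ε * b j)| ≤ ε / 2}) :
    ∀ δ : ℝ, 0 < δ →
    Tendsto (fun n => μ {ω | ∃ w : ℕ → ℝ,
        (∀ i ∈ (Finset.range n).filter (fun i => T i ω = false), 0 < w i) ∧
        (∑ i ∈ (Finset.range n).filter (fun i => T i ω = false), w i = 1) ∧
        (∀ j, ∑ i ∈ (Finset.range n).filter (fun i => T i ω = false), w i * c (X i ω) j
          = ((((Finset.range n).filter (fun i => T i ω = true)).card : ℝ))⁻¹ *
            ∑ i ∈ (Finset.range n).filter (fun i => T i ω = true), c (X i ω) j) ∧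
        (∀ i ∈ (Finset.range n).filter (fun i => T i ω = false), w i < δ) ∧
        (∑ i ∈ (Finset.range n).filter (fun i => T i ω = false), (w i) ^ 2 < δ)})
      atTop (nhds 1) := by
  classical
  intro δ hδ
  have hpm : ∀ i, Measurable fun ω => (X i ω, T i ω) := fun i => (hXm i).prodMk (hTm i)
  have hE1m : MeasurableSet {ω | T 0 ω = true} := (hTm 0) (measurableSet_singleton true)
  have hE0m : MeasurableSet {ω | T 0 ω = false} := (hTm 0) (measurableSet_singleton false)
  have hboundInt : ∀ f : Ω → ℝ, Measurable f → (∀ ω, |f ω| ≤ 1) → Integrable f μ := by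
    intro f hf hb
    exact (integrable_const (1:ℝ)).mono' hf.aestronglyMeasurable
      (ae_of_all _ fun ω => by simpa [Real.norm_eq_abs] using hb ω)
  -- constants
  set K : ℕ := ⌈2/δ⌉₊ + 1 with hKdef
  have hK : 2/δ < (K:ℝ) := by
    have h := Nat.le_ceil (2/δ)
    have h2 : ((⌈2/δ⌉₊ : ℕ) : ℝ) + 1 = (K:ℝ) := by rw [hKdef]; push_cast; ring
    linarith
  set p1 : ℝ := (μ {ω | T 0 ω = true}).toReal with hp1def
  have hp1 : 0 < p1 := ENNReal.toReal_pos hT1 (measure_ne_top μ _)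
  set p0 : ℝ := (μ {ω | T 0 ω = false}).toReal with hp0def
  have hp0 : 0 < p0 := ENNReal.toReal_pos hT0 (measure_ne_top μ _)
  -- measurability of building blocks on the product space
  have hcmj : ∀ j, Measurable fun q : 𝓧 × Bool => c q.1 j :=
    fun j => (measurable_pi_apply j).comp (hc.comp measurable_fst)
  have hsnd : ∀ t : Bool, MeasurableSet {q : 𝓧 × Bool | q.2 = t} :=
    fun t => measurable_snd (measurableSet_singleton t)
  have hF1m : Measurable (fun q : 𝓧 × Bool => if q.2 = true then (1:ℝ) else 0) :=
    Measurable.ite (hsnd true) measurable_const measurable_const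
  have hF0m : Measurable (fun q : 𝓧 × Bool => if q.2 = false then (1:ℝ) else 0) :=
    Measurable.ite (hsnd false) measurable_const measurable_const
  have hboxsetm : ∀ b : Fin p → Bool, MeasurableSet {q : 𝓧 × Bool |
      q.2 = false ∧ ∀ j, |c q.1 j - (cstar j + 3 / 2 * ε * (if b j then 1 else -1))| ≤ ε / 2} := by
    intro b
    rw [Set.setOf_and]
    refine (hsnd false).inter ?_
    rw [Set.setOf_forall]
    exact MeasurableSet.iInter fun j =>
      measurableSet_le (((hcmj j).sub measurable_const).abs) measurable_const
  have hFbm : ∀ b : Fin p → Bool, Measurable (fun q : 𝓧 × Bool =>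
      if (q.2 = false ∧ ∀ j, |c q.1 j - (cstar j + 3 / 2 * ε * (if b j then 1 else -1))| ≤ ε / 2)
      then (1:ℝ) else 0) :=
    fun b => Measurable.ite (hboxsetm b) measurable_const measurable_const
  have hG4m : ∀ j, Measurable (fun q : 𝓧 × Bool => (if q.2 = true then (1:ℝ) else 0) * c q.1 j) :=
    fun j => hF1m.mul (hcmj j)
  have hG5m : ∀ j, Measurable (fun q : 𝓧 × Bool => (if q.2 = false then (1:ℝ) else 0) * c q.1 j) :=
    fun j => hF0m.mul (hcmj j)
  -- integrability
  have hGint : ∀ (t : Bool) (j : Fin p),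
      Integrable (fun ω => (if T 0 ω = t then (1:ℝ) else 0) * c (X 0 ω) j) μ := by
    intro t j
    have hm : Measurable (fun ω => (if T 0 ω = t then (1:ℝ) else 0) * c (X 0 ω) j) := by
      cases t
      · exact (hG5m j).comp (hpm 0)
      · exact (hG4m j).comp (hpm 0)
    refine hcint.norm.mono' hm.aestronglyMeasurable (ae_of_all _ fun ω => ?_)
    rw [Real.norm_eq_abs, abs_mul]
    calc |if T 0 ω = t then (1:ℝ) else 0| * |c (X 0 ω) j|
        ≤ 1 * ‖c (X 0 ω)‖ := by
          apply mul_le_mul _ _ (abs_nonneg _) zero_le_one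
          · split <;> norm_num
          · simpa [Real.norm_eq_abs] using norm_le_pi_norm (c (X 0 ω)) j
      _ = ‖c (X 0 ω)‖ := one_mul _
  -- integral identities
  have hIF1 : ∫ ω, (if T 0 ω = true then (1:ℝ) else 0) ∂μ = p1 := by
    have heq : (fun ω => if T 0 ω = true then (1:ℝ) else 0)
        = Set.indicator {ω | T 0 ω = true} (fun _ => (1:ℝ)) := by
      funext ω
      by_cases h : T 0 ω = true <;> simp [h, Set.indicator_apply]
    rw [heq, integral_indicator_const (1:ℝ) hE1m, smul_eq_mul, mul_one, hp1def]
    rfl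
  have hIF0 : ∫ ω, (if T 0 ω = false then (1:ℝ) else 0) ∂μ = p0 := by
    have heq : (fun ω => if T 0 ω = false then (1:ℝ) else 0)
        = Set.indicator {ω | T 0 ω = false} (fun _ => (1:ℝ)) := by
      funext ω
      by_cases h : T 0 ω = false <;> simp [h, Set.indicator_apply]
    rw [heq, integral_indicator_const (1:ℝ) hE0m, smul_eq_mul, mul_one, hp0def]
    rfl
  have hIG4 : ∀ j, ∫ ω, (if T 0 ω = true then (1:ℝ) else 0) * c (X 0 ω) j ∂μ
      = p1 * cstar j := by
    intro j
    have heq : (fun ω => (if T 0 ω = true then (1:ℝ) else 0) * c (X 0 ω) j)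
        = Set.indicator {ω | T 0 ω = true} (fun ω => c (X 0 ω) j) := by
      funext ω
      by_cases h : T 0 ω = true <;> simp [h, Set.indicator_apply]
    rw [heq, integral_indicator hE1m]
    have h2 := hcstar j
    rw [show (μ[|{ω | T 0 ω = true}])
        = (μ {ω | T 0 ω = true})⁻¹ • μ.restrict {ω | T 0 ω = true} from rfl] at h2
    rw [integral_smul_measure, ENNReal.toReal_inv, smul_eq_mul, ← hp1def] at h2
    rw [h2, ← mul_assoc, mul_inv_cancel₀ hp1.ne', one_mul]
  -- positivity of the box probabilities
  have hIb : ∀ b : Fin p → Bool, 0 < ∫ ω, (if (T 0 ω = false ∧ ∀ j,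
      |c (X 0 ω) j - (cstar j + 3 / 2 * ε * (if b j then 1 else -1))| ≤ ε / 2)
      then (1:ℝ) else 0) ∂μ := by
    intro b
    have hAm : MeasurableSet {ω | T 0 ω = false ∧ ∀ j,
        |c (X 0 ω) j - (cstar j + 3 / 2 * ε * (if b j then 1 else -1))| ≤ ε / 2} :=
      (hpm 0) (hboxsetm b)
    have heq : (fun ω => if (T 0 ω = false ∧ ∀ j,
        |c (X 0 ω) j - (cstar j + 3 / 2 * ε * (if b j then 1 else -1))| ≤ ε / 2)
        then (1:ℝ) else 0)
        = Set.indicator {ω | T 0 ω = false ∧ ∀ j,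
            |c (X 0 ω) j - (cstar j + 3 / 2 * ε * (if b j then 1 else -1))| ≤ ε / 2}
          (fun _ => (1:ℝ)) := by
      funext ω
      by_cases h : (T 0 ω = false ∧ ∀ j,
        |c (X 0 ω) j - (cstar j + 3 / 2 * ε * (if b j then 1 else -1))| ≤ ε / 2)
      · simp [h, Set.indicator_apply]
      · simp [h, Set.indicator_apply]
    rw [heq, integral_indicator_const (1:ℝ) hAm, smul_eq_mul, mul_one]
    apply ENNReal.toReal_pos _ (measure_ne_top μ _)
    have hb := hbox (fun j => if b j then (1:ℝ) else -1) (by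
      intro j
      by_cases h : b j
      · right; right; simp [h]
      · left; simp [h])
    rw [cond_apply hE0m] at hb
    intro h0
    rw [Set.setOf_and] at h0
    rw [h0, mul_zero] at hb
    exact lt_irrefl 0 hb
  -- strong laws of large numbers
  have hae1 : ∀ᵐ ω ∂μ, Tendsto
      (fun n : ℕ => (∑ i ∈ range n, (if T i ω = true then (1:ℝ) else 0)) / n)
      atTop (𝓝 p1) := by
    have h := slln_pair μ X T hXm hTm hindep hident
      (fun q => if q.2 = true then (1:ℝ) else 0) hF1m
      (hboundInt _ (hF1m.comp (hpm 0)) (fun ω => by dsimp only; split <;> norm_num))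
    simp only at h
    rwa [hIF1] at h
  have hae0 : ∀ᵐ ω ∂μ, Tendsto
      (fun n : ℕ => (∑ i ∈ range n, (if T i ω = false then (1:ℝ) else 0)) / n)
      atTop (𝓝 p0) := by
    have h := slln_pair μ X T hXm hTm hindep hident
      (fun q => if q.2 = false then (1:ℝ) else 0) hF0m
      (hboundInt _ (hF0m.comp (hpm 0)) (fun ω => by dsimp only; split <;> norm_num))
    simp only at h
    rwa [hIF0] at h
  have haeb : ∀ᵐ ω ∂μ, ∀ b : Fin p → Bool, Tendsto
      (fun n : ℕ => (∑ i ∈ range n, (if (T i ω = false ∧ ∀ j,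
        |c (X i ω) j - (cstar j + 3 / 2 * ε * (if b j then 1 else -1))| ≤ ε / 2)
        then (1:ℝ) else 0)) / n)
      atTop (𝓝 (∫ ω, (if (T 0 ω = false ∧ ∀ j,
        |c (X 0 ω) j - (cstar j + 3 / 2 * ε * (if b j then 1 else -1))| ≤ ε / 2)
        then (1:ℝ) else 0) ∂μ)) := by
    rw [ae_all_iff]
    intro b
    have h := slln_pair μ X T hXm hTm hindep hident
      (fun q => if (q.2 = false ∧ ∀ j,
        |c q.1 j - (cstar j + 3 / 2 * ε * (if b j then 1 else -1))| ≤ ε / 2)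
        then (1:ℝ) else 0) (hFbm b)
      (hboundInt _ ((hFbm b).comp (hpm 0)) (fun ω => by dsimp only; split <;> norm_num))
    simpa using h
  have hae4 : ∀ᵐ ω ∂μ, ∀ j : Fin p, Tendsto
      (fun n : ℕ => (∑ i ∈ range n, (if T i ω = true then (1:ℝ) else 0) * c (X i ω) j) / n)
      atTop (𝓝 (p1 * cstar j)) := by
    rw [ae_all_iff]
    intro j
    have h := slln_pair μ X T hXm hTm hindep hident
      (fun q => (if q.2 = true then (1:ℝ) else 0) * c q.1 j) (hG4m j)
      (hGint true j)
    simp only at h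
    rwa [hIG4 j] at h
  have hae5 : ∀ᵐ ω ∂μ, ∀ j : Fin p, Tendsto
      (fun n : ℕ => (∑ i ∈ range n, (if T i ω = false then (1:ℝ) else 0) * c (X i ω) j) / n)
      atTop (𝓝 (∫ ω, (if T 0 ω = false then (1:ℝ) else 0) * c (X 0 ω) j ∂μ)) := by
    rw [ae_all_iff]
    intro j
    have h := slln_pair μ X T hXm hTm hindep hident
      (fun q => (if q.2 = false then (1:ℝ) else 0) * c q.1 j) (hG5m j)
      (hGint false j)
    simpa using h
  -- the constant B
  set A5 : Fin p → ℝ := fun j => ∫ ω, (if T 0 ω = false then (1:ℝ) else 0) * c (X 0 ω) j ∂μ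
    with hA5def
  set B : ℝ := 1 + ∑ j, |A5 j / p0 - cstar j| with hBdef
  have hB : 0 < B := by
    rw [hBdef]
    have := Finset.sum_nonneg (fun j (_ : j ∈ Finset.univ) => abs_nonneg (A5 j / p0 - cstar j))
    linarith
  -- the good events
  set Gset : ℕ → Set Ω := fun n => {ω |
      (∀ b : Fin p → Bool, K ≤ ((range n).filter (fun i => T i ω = false ∧ ∀ j,
        |c (X i ω) j - (cstar j + 3 / 2 * ε * (if b j then 1 else -1))| ≤ ε / 2)).card) ∧
      (∀ j, |((((range n).filter (fun i => T i ω = true)).card : ℝ))⁻¹ *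
        ∑ i ∈ (range n).filter (fun i => T i ω = true), c (X i ω) j - cstar j| ≤ ε/2) ∧
      (∀ j, |((((range n).filter (fun i => T i ω = false)).card : ℝ))⁻¹ *
        ∑ i ∈ (range n).filter (fun i => T i ω = false), c (X i ω) j - cstar j| ≤ B)}
    with hGdef
  -- sums representations
  have hcardrep : ∀ (t : Bool) (n : ℕ) (ω : Ω),
      ((((range n).filter (fun i => T i ω = t)).card : ℕ) : ℝ)
        = ∑ i ∈ range n, (if T i ω = t then (1:ℝ) else 0) :=
    fun t n ω => by rw [Finset.sum_boole]
  have hsumrep : ∀ (t : Bool) (n : ℕ) (ω : Ω) (j : Fin p),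
      ∑ i ∈ (range n).filter (fun i => T i ω = t), c (X i ω) j
        = ∑ i ∈ range n, (if T i ω = t then (1:ℝ) else 0) * c (X i ω) j := by
    intro t n ω j
    rw [Finset.sum_filter]
    exact Finset.sum_congr rfl (fun i _ => (boole_mul _ _).symm)
  have hcntrep : ∀ (b : Fin p → Bool) (n : ℕ) (ω : Ω),
      ((((range n).filter (fun i => T i ω = false ∧ ∀ j,
        |c (X i ω) j - (cstar j + 3 / 2 * ε * (if b j then 1 else -1))| ≤ ε / 2)).card : ℕ) : ℝ)
        = ∑ i ∈ range n, (if (T i ω = false ∧ ∀ j,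
        |c (X i ω) j - (cstar j + 3 / 2 * ε * (if b j then 1 else -1))| ≤ ε / 2)
        then (1:ℝ) else 0) :=
    fun b n ω => by rw [Finset.sum_boole]
  -- measurability of the good events
  have hGm : ∀ n, MeasurableSet (Gset n) := by
    intro n
    rw [hGdef]
    have hs1 : ∀ t : Bool, Measurable (fun ω =>
        ∑ i ∈ range n, (if T i ω = t then (1:ℝ) else 0)) := by
      intro t
      apply Finset.measurable_sum
      intro i _
      cases t
      · exact hF0m.comp (hpm i)
      · exact hF1m.comp (hpm i)
    have hs2 : ∀ (t : Bool) (j : Fin p), Measurable (fun ω =>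
        ∑ i ∈ range n, (if T i ω = t then (1:ℝ) else 0) * c (X i ω) j) := by
      intro t j
      apply Finset.measurable_sum
      intro i _
      cases t
      · exact (hG5m j).comp (hpm i)
      · exact (hG4m j).comp (hpm i)
    have hs3 : ∀ b : Fin p → Bool, Measurable (fun ω =>
        ∑ i ∈ range n, (if (T i ω = false ∧ ∀ j,
        |c (X i ω) j - (cstar j + 3 / 2 * ε * (if b j then 1 else -1))| ≤ ε / 2)
        then (1:ℝ) else 0)) := by
      intro b
      apply Finset.measurable_sum
      intro i _
      exact (hFbm b).comp (hpm i)
    simp only [Set.setOf_and]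
    apply MeasurableSet.inter
    · rw [Set.setOf_forall]
      apply MeasurableSet.iInter
      intro b
      have heq : {ω | K ≤ ((range n).filter (fun i => T i ω = false ∧ ∀ j,
          |c (X i ω) j - (cstar j + 3 / 2 * ε * (if b j then 1 else -1))| ≤ ε / 2)).card}
          = {ω | (K:ℝ) ≤ ∑ i ∈ range n, (if (T i ω = false ∧ ∀ j,
          |c (X i ω) j - (cstar j + 3 / 2 * ε * (if b j then 1 else -1))| ≤ ε / 2)
          then (1:ℝ) else 0)} := by
        ext ω
        rw [Set.mem_setOf_eq, Set.mem_setOf_eq, ← hcntrep b n ω, Nat.cast_le]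
      rw [heq]
      exact measurableSet_le measurable_const (hs3 b)
    apply MeasurableSet.inter
    · rw [Set.setOf_forall]
      apply MeasurableSet.iInter
      intro j
      have heq : {ω | |((((range n).filter (fun i => T i ω = true)).card : ℝ))⁻¹ *
          ∑ i ∈ (range n).filter (fun i => T i ω = true), c (X i ω) j - cstar j| ≤ ε/2}
          = {ω | |(∑ i ∈ range n, (if T i ω = true then (1:ℝ) else 0))⁻¹ *
          (∑ i ∈ range n, (if T i ω = true then (1:ℝ) else 0) * c (X i ω) j) - cstar j| ≤ ε/2} := by
        ext ω
        rw [Set.mem_setOf_eq, Set.mem_setOf_eq, ← hcardrep true n ω, ← hsumrep true n ω j]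
      rw [heq]
      exact measurableSet_le
        (((((hs1 true).inv).mul (hs2 true j)).sub measurable_const).abs) measurable_const
    · rw [Set.setOf_forall]
      apply MeasurableSet.iInter
      intro j
      have heq : {ω | |((((range n).filter (fun i => T i ω = false)).card : ℝ))⁻¹ *
          ∑ i ∈ (range n).filter (fun i => T i ω = false), c (X i ω) j - cstar j| ≤ B}
          = {ω | |(∑ i ∈ range n, (if T i ω = false then (1:ℝ) else 0))⁻¹ *
          (∑ i ∈ range n, (if T i ω = false then (1:ℝ) else 0) * c (X i ω) j) - cstar j| ≤ B} := by
        ext ω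
        rw [Set.mem_setOf_eq, Set.mem_setOf_eq, ← hcardrep false n ω, ← hsumrep false n ω j]
      rw [heq]
      exact measurableSet_le
        (((((hs1 false).inv).mul (hs2 false j)).sub measurable_const).abs) measurable_const
  -- almost surely, the good event eventually holds
  have haegood : ∀ᵐ ω ∂μ, ∀ᶠ n in atTop, ω ∈ Gset n := by
    filter_upwards [hae1, hae0, haeb, hae4, hae5] with ω h1 h0 hb h4 h5
    have ev1 : ∀ᶠ n in atTop, ∀ b : Fin p → Bool,
        K ≤ ((range n).filter (fun i => T i ω = false ∧ ∀ j,
        |c (X i ω) j - (cstar j + 3 / 2 * ε * (if b j then 1 else -1))| ≤ ε / 2)).card := by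
      rw [Filter.eventually_all]
      intro b
      have h := count_eventually_ge _ _ (hIb b) (hb b) (K:ℝ)
      filter_upwards [h] with n hn
      rw [← Nat.cast_le (α := ℝ), hcntrep b n ω]
      exact hn
    have ev2 : ∀ᶠ n in atTop, ∀ j : Fin p,
        |((((range n).filter (fun i => T i ω = true)).card : ℝ))⁻¹ *
        ∑ i ∈ (range n).filter (fun i => T i ω = true), c (X i ω) j - cstar j| ≤ ε/2 := by
      rw [Filter.eventually_all]
      intro j
      have h := ratio_eventually_close _ _ (cstar j) p1 hp1 (h4 j) h1 (ε/2) (by positivity)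
      filter_upwards [h] with n hn
      rw [hcardrep true n ω, hsumrep true n ω j]
      exact hn
    have ev3 : ∀ᶠ n in atTop, ∀ j : Fin p,
        |((((range n).filter (fun i => T i ω = false)).card : ℝ))⁻¹ *
        ∑ i ∈ (range n).filter (fun i => T i ω = false), c (X i ω) j - cstar j| ≤ B := by
      rw [Filter.eventually_all]
      intro j
      have hlim : Tendsto (fun n : ℕ =>
          (∑ i ∈ range n, (if T i ω = false then (1:ℝ) else 0) * c (X i ω) j) / n)
          atTop (𝓝 (p0 * (A5 j / p0))) := by
        have heq : p0 * (A5 j / p0) = A5 j := by field_simp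
        rw [heq]
        exact h5 j
      have h := ratio_eventually_close _ _ (A5 j / p0) p0 hp0 hlim h0 1 one_pos
      filter_upwards [h] with n hn
      rw [hcardrep false n ω, hsumrep false n ω j]
      have htri := abs_sub_le
        ((∑ i ∈ range n, (if T i ω = false then (1:ℝ) else 0))⁻¹ *
          (∑ i ∈ range n, (if T i ω = false then (1:ℝ) else 0) * c (X i ω) j))
        (A5 j / p0) (cstar j)
      have hsingle : |A5 j / p0 - cstar j| ≤ ∑ k, |A5 k / p0 - cstar k| :=
        Finset.single_le_sum (f := fun k => |A5 k / p0 - cstar k|) (fun k _ => abs_nonneg _) (Finset.mem_univ j)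
      rw [hBdef]
      linarith
    filter_upwards [ev1, ev2, ev3] with n e1 e2 e3
    rw [hGdef]
    exact ⟨e1, e2, e3⟩
  -- probability of good events tends to one
  have hGtend : Tendsto (fun n => μ (Gset n)) atTop (𝓝 1) := by
    have h := tendsto_measure_of_ae_tendsto_indicator_of_isFiniteMeasure (μ := μ) atTop
      MeasurableSet.univ hGm ?_
    · simpa using h
    · filter_upwards [haegood] with ω hω
      filter_upwards [hω] with n hn
      exact iff_of_true hn trivial
  -- conclusion by squeezing
  refine tendsto_of_tendsto_of_tendsto_of_le_of_le hGtend tendsto_const_nhds ?_ ?_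
  · intro n
    apply measure_mono
    intro ω hω
    rw [hGdef] at hω
    obtain ⟨hcnt, hY, hU⟩ := hω
    obtain ⟨w, hw1, hw2, hw3, hw4, hw5⟩ := weightsOfGood cstar ε hε δ B hδ hB K hK
      ((range n).filter (fun i => T i ω = false)) (fun i => c (X i ω))
      (fun j => ((((range n).filter (fun i => T i ω = true)).card : ℝ))⁻¹ *
        ∑ i ∈ (range n).filter (fun i => T i ω = true), c (X i ω) j)
      (fun b => by rw [Finset.filter_filter]; exact hcnt b) hY hU
    exact ⟨w, hw1, hw2, hw3, hw4, hw5⟩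
  · exact fun n => prob_le_one
end
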